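/- arXiv:0707.1733 — 2 statements merged into one kernel-verified Lean document; each statement's English description precedes it below -/
import Mathlib

section
/- (i) For every λ ∈ Λ^+, the R-linear map sending φ_T^{(λ,0)} to barφ_T for T ∈ T_0^p(λ) is an isomorphism Z_p^{(λ,0)} ≅ barZ_p^λ of right S^p-modules, where barZ_p^λ is regarded as an S^p-module through the projection π : S^p → barS^p. (ii) If R is a field, this map induces an isomorphism L_p^{(λ,0)} ≅ barL_p^λ of S^p-modules. -/
/-!
Common framework for the formalization of results of Shoji–Wada,
"Cyclotomic q-Schur algebras associated to the Ariki-Koike algebra".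
-/

open scoped BigOperators TensorProduct
open MulOpposite

noncomputable section

/-! ## Multicompositions -/

/-- An `r`-multicomposition of `n`, whose `k`-th component is a composition
of length `≤ m k`. -/
structure MultiComp (n r : ℕ) (m : Fin r → ℕ) where
  part : (k : Fin r) → Fin (m k) → ℕ
  sum_eq : (∑ k, ∑ i, part k i) = n

namespace MultiComp

variable {n r : ℕ} {m : Fin r → ℕ}

theorem part_injective : Function.Injective (part : MultiComp n r m → _) := by
  rintro ⟨a, _⟩ ⟨b, _⟩ h
  simpa using h

instance : DecidableEq (MultiComp n r m) := fun a b =>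
  decidable_of_iff (a.part = b.part) part_injective.eq_iff

theorem part_le_n (lam : MultiComp n r m) (k : Fin r) (i : Fin (m k)) :
    lam.part k i ≤ n := by
  calc lam.part k i ≤ ∑ i, lam.part k i :=
        Finset.single_le_sum (fun _ _ => Nat.zero_le _) (Finset.mem_univ i)
    _ ≤ ∑ k, ∑ i, lam.part k i :=
        Finset.single_le_sum (f := fun k => ∑ i, lam.part k i)
          (fun _ _ => Nat.zero_le _) (Finset.mem_univ k)
    _ = n := lam.sum_eq

instance : Fintype (MultiComp n r m) :=
  Fintype.ofInjective
    (fun lam (k : Fin r) (i : Fin (m k)) =>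
      (⟨lam.part k i, Nat.lt_succ_of_le (part_le_n lam k i)⟩ : Fin (n + 1)))
    (fun a b h => part_injective (by
      funext k i
      exact congrArg Fin.val (congrFun (congrFun h k) i)))

/-- an `r`-multipartition: every component is weakly decreasing -/
def IsPartition (lam : MultiComp n r m) : Prop :=
  ∀ (k : Fin r) (i j : Fin (m k)), i ≤ j → lam.part k j ≤ lam.part k i

instance (lam : MultiComp n r m) : Decidable lam.IsPartition := by
  unfold IsPartition; infer_instance

/-- the size `|λ^{(k)}|` of the `k`-th component -/
def compSize (lam : MultiComp n r m) (k : Fin r) : ℕ := ∑ i, lam.part k i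

/-- the dominance order `λ ⊵ μ` on multicompositions -/
def Dominates (lam mu : MultiComp n r m) : Prop :=
  ∀ (k : Fin r) (i : Fin (m k)),
    ((∑ c ∈ Finset.univ.filter fun c => c < k, mu.compSize c) +
        ∑ j ∈ Finset.univ.filter fun j => j ≤ i, mu.part k j) ≤
      (∑ c ∈ Finset.univ.filter fun c => c < k, lam.compSize c) +
        ∑ j ∈ Finset.univ.filter fun j => j ≤ i, lam.part k j

/-- the strict dominance order `λ ⊳ μ` -/
def SDominates (lam mu : MultiComp n r m) : Prop :=
  Dominates lam mu ∧ lam ≠ mu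

end MultiComp

/-- `Λ` is a saturated set of multicompositions: it contains every multipartition
dominating one of its members. -/
def Saturated {n r : ℕ} {m : Fin r → ℕ} (Λ : Finset (MultiComp n r m)) : Prop :=
  ∀ lam : MultiComp n r m, lam.IsPartition →
    (∃ mu ∈ Λ, MultiComp.Dominates lam mu) → lam ∈ Λ

/-! ## Tableaux -/

/-- the set of entries `(i,k)` (row `i` of component `k`) for tableaux -/
abbrev MCEntry (r : ℕ) (m : Fin r → ℕ) := Σ k : Fin r, Fin (m k)

/-- the total order on entries: `(i₁,k₁) ≤ (i₂,k₂)` iff `k₁ < k₂`, or `k₁ = k₂` and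
`i₁ ≤ i₂`. -/
def entryLE {r : ℕ} {m : Fin r → ℕ} (a b : MCEntry r m) : Prop :=
  a.1 < b.1 ∨ (a.1 = b.1 ∧ (a.2 : ℕ) ≤ (b.2 : ℕ))

/-- the associated strict order on entries -/
def entryLT {r : ℕ} {m : Fin r → ℕ} (a b : MCEntry r m) : Prop :=
  a.1 < b.1 ∨ (a.1 = b.1 ∧ (a.2 : ℕ) < (b.2 : ℕ))

/-- the cells `(k, i, j)` (component `k`, row `i`, column `j`) of the Young diagram
of a multicomposition -/
abbrev MultiComp.Cell {n r : ℕ} {m : Fin r → ℕ} (lam : MultiComp n r m) :=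
  Σ (k : Fin r) (i : Fin (m k)), Fin (lam.part k i)

/-- Semistandard tableaux of shape `lam` and type `mu` in the sense of
Dipper–James–Mathas: rows weakly increase, columns strictly increase, the entries of
the `k`-th component have second coordinate `≥ k`, and for each entry `(i,k)` the
number of cells carrying it equals `mu.part k i`. -/
structure SSTab {n r : ℕ} {m : Fin r → ℕ} (lam mu : MultiComp n r m) where
  entry : lam.Cell → MCEntry r m
  rowWeak : ∀ (k : Fin r) (i : Fin (m k)) (j j' : Fin (lam.part k i)),
    j ≤ j' → entryLE (entry ⟨k, i, j⟩) (entry ⟨k, i, j'⟩)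
  colStrict : ∀ (k : Fin r) (i i' : Fin (m k)) (j : ℕ)
    (hj : j < lam.part k i) (hj' : j < lam.part k i'), i < i' →
    entryLT (entry ⟨k, i, ⟨j, hj⟩⟩) (entry ⟨k, i', ⟨j, hj'⟩⟩)
  compLE : ∀ c : lam.Cell, c.1 ≤ (entry c).1
  typeCount : ∀ e : MCEntry r m,
    mu.part e.1 e.2 = Fintype.card {c : lam.Cell // entry c = e}

namespace SSTab

variable {n r : ℕ} {m : Fin r → ℕ} {lam mu : MultiComp n r m}

theorem entry_injective : Function.Injective (entry : SSTab lam mu → _) := by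
  rintro ⟨a, _, _, _, _⟩ ⟨b, _, _, _, _⟩ h
  simpa using h

instance : Fintype (SSTab lam mu) := Fintype.ofInjective entry entry_injective

instance : DecidableEq (SSTab lam mu) := fun a b =>
  decidable_of_iff (a.entry = b.entry) entry_injective.eq_iff

end SSTab

/-- Standard tableaux of shape `lam`: bijective fillings of the diagram by the
letters `1, …, n`, increasing along rows and down columns. -/
structure StdTab {n r : ℕ} {m : Fin r → ℕ} (lam : MultiComp n r m) where
  entry : lam.Cell → Fin n
  bij : Function.Bijective entry
  rowStrict : ∀ (k : Fin r) (i : Fin (m k)) (j j' : Fin (lam.part k i)),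
    j < j' → entry ⟨k, i, j⟩ < entry ⟨k, i, j'⟩
  colStrict : ∀ (k : Fin r) (i i' : Fin (m k)) (j : ℕ)
    (hj : j < lam.part k i) (hj' : j < lam.part k i'), i < i' →
    entry ⟨k, i, ⟨j, hj⟩⟩ < entry ⟨k, i', ⟨j, hj'⟩⟩

namespace StdTab

variable {n r : ℕ} {m : Fin r → ℕ} {lam : MultiComp n r m}

theorem entry_injective : Function.Injective (entry : StdTab lam → _) := by
  rintro ⟨a, _, _, _⟩ ⟨b, _, _, _⟩ h
  simpa using h

instance : Fintype (StdTab lam) := Fintype.ofInjective entry entry_injective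

end StdTab
/-! ## The block structure attached to `p = (r₁, …, r_g)` -/

/-- componentwise comparison of vectors in `ℤ_{≥0}^g` -/
def vecLE {g : ℕ} (f h : Fin g → ℕ) : Prop := ∀ b, f b ≤ h b

instance {g : ℕ} (f h : Fin g → ℕ) : Decidable (vecLE f h) := by
  unfold vecLE; infer_instance

/-- strict componentwise comparison: `f ≤ h` componentwise and `f ≠ h` -/
def vecLT {g : ℕ} (f h : Fin g → ℕ) : Prop := vecLE f h ∧ f ≠ h

instance {g : ℕ} (f h : Fin g → ℕ) : Decidable (vecLT f h) := by
  unfold vecLT; infer_instance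

/-- The datum of `p = (r₁, …, r_g)`, encoded by the map sending a component
`k ∈ {1, …, r}` to its block: the fibers of `π` are the intervals
`{p_b + 1, …, p_b + r_b}`, of sizes `r_b > 0`. -/
structure BlockCtx (r g : ℕ) where
  π : Fin r → Fin g
  mono : Monotone π
  surj : Function.Surjective π

namespace BlockCtx

variable {r g : ℕ} (P : BlockCtx r g) {n : ℕ} {m : Fin r → ℕ}

/-- `α_p(μ) = (n₁, …, n_g)`, `n_b = |μ^{[b]}|` -/
def alphaP (mu : MultiComp n r m) : Fin g → ℕ := fun b =>
  ∑ k ∈ Finset.univ.filter fun k => P.π k = b, mu.compSize k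

/-- `a_p(μ) = (a₁, …, a_g)`, `a_b = n₁ + ⋯ + n_{b-1}` -/
def aP (mu : MultiComp n r m) : Fin g → ℕ := fun b =>
  ∑ k ∈ Finset.univ.filter fun k => P.π k < b, mu.compSize k

/-- `r_b`, the number of components in block `b` -/
def rblk (b : Fin g) : ℕ := (Finset.univ.filter fun k => P.π k = b).card

/-- the components in block `b`, listed in increasing order -/
def blkEquiv (b : Fin g) :
    Fin (P.rblk b) ≃o {x // x ∈ Finset.univ.filter fun k => P.π k = b} :=
  (Finset.univ.filter fun k => P.π k = b).orderIsoOfFin rfl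

/-- `m^{[b]}`, the row bounds of block `b` -/
def mblk (m : Fin r → ℕ) (b : Fin g) : Fin (P.rblk b) → ℕ :=
  fun i => m ((P.blkEquiv b i : {x // x ∈ Finset.univ.filter fun k => P.π k = b}) : Fin r)

/-- the block component `μ^{[b]}` of a multicomposition, an `r_b`-multicomposition
of `n_b = α_p(μ)_b` -/
def restrictTo (mu : MultiComp n r m) (b : Fin g) (nb : ℕ)
    (h : P.alphaP mu b = nb) : MultiComp nb (P.rblk b) (P.mblk m b) where
  part := fun k i => mu.part ((P.blkEquiv b k :
    {x // x ∈ Finset.univ.filter fun k => P.π k = b}) : Fin r) i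
  sum_eq := by
    subst h
    calc (∑ k : Fin (P.rblk b), ∑ i, mu.part ((P.blkEquiv b k :
            {x // x ∈ Finset.univ.filter fun k => P.π k = b}) : Fin r) i)
        = ∑ x : {x // x ∈ Finset.univ.filter fun k => P.π k = b},
            mu.compSize (x : Fin r) :=
          Fintype.sum_equiv (P.blkEquiv b).toEquiv _ _ (fun _ => rfl)
      _ = ∑ k ∈ Finset.univ.filter fun k => P.π k = b, mu.compSize k :=
          Finset.sum_coe_sort _ _
      _ = P.alphaP mu b := rfl

theorem restrictTo_isPartition (mu : MultiComp n r m) (hmu : mu.IsPartition)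
    (b : Fin g) (nb : ℕ) (h : P.alphaP mu b = nb) :
    (P.restrictTo mu b nb h).IsPartition :=
  fun k i j hij => hmu _ i j hij

/-- the largest component index in block `b` (that is, `p_b + r_b`) -/
def blockLast (b : Fin g) : Fin r :=
  (Finset.univ.filter fun k => P.π k = b).max' (by
    obtain ⟨k, hk⟩ := P.surj b
    exact ⟨k, Finset.mem_filter.2 ⟨Finset.mem_univ _, hk⟩⟩)

end BlockCtx
/-! ## The cyclotomic q-Schur algebra with its Dipper–James–Mathas cellular basis -/

/-- the multicompositions belonging to `Λ` -/
abbrev LamS {n r : ℕ} {m : Fin r → ℕ} (Λ : Finset (MultiComp n r m)) := {x // x ∈ Λ}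

/-- `Λ⁺`, the multipartitions belonging to `Λ` -/
abbrev LamP {n r : ℕ} {m : Fin r → ℕ} (Λ : Finset (MultiComp n r m)) :=
  {x : MultiComp n r m // x ∈ Λ ∧ x.IsPartition}

/-- the index set of the Dipper–James–Mathas cellular basis
`{φ_{S,T} : S ∈ T₀(λ,μ), T ∈ T₀(λ,ν), λ ∈ Λ⁺, μ, ν ∈ Λ}` -/
abbrev DJMIndex {n r : ℕ} {m : Fin r → ℕ} (Λ : Finset (MultiComp n r m)) :=
  Σ (lam : LamP Λ) (mu : LamS Λ) (nu : LamS Λ), SSTab lam.1 mu.1 × SSTab lam.1 nu.1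

/-- Abstract datum of the cyclotomic q-Schur algebra `S(Λ) = End_H(⊕_{μ∈Λ} M^μ)`
together with its Dipper–James–Mathas cellular basis `φ_{S,T}`
(`bas ⟨λ, μ, ν, (S, T)⟩` is the basis element `φ_{S,T} ∈ Hom_H(M^ν, M^μ)` for
`S ∈ T₀(λ,μ)`, `T ∈ T₀(λ,ν)`), with its cellular anti-automorphism `*`
(`astar`), and the orthogonal idempotents `φ_μ = id_{M^μ}` (`phiId`). -/
structure SchurAlgebra (R : Type) [CommRing R] {n r : ℕ} {m : Fin r → ℕ}
    (Λ : Finset (MultiComp n r m)) where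
  carrier : Type
  [ringI : Ring carrier]
  [algI : Algebra R carrier]
  bas : Module.Basis (DJMIndex Λ) R carrier
  astar : carrier →ₗ[R] carrier
  astar_mul : ∀ x y : carrier, astar (x * y) = astar y * astar x
  astar_bas : ∀ (lam : LamP Λ) (mu nu : LamS Λ)
    (S : SSTab lam.1 mu.1) (T : SSTab lam.1 nu.1),
    astar (bas ⟨lam, mu, nu, (S, T)⟩) = bas ⟨lam, nu, mu, (T, S)⟩
  phiId : LamS Λ → carrier
  phiId_sum : ∑ mu : LamS Λ, phiId mu = 1
  phiId_mul : ∀ mu nu : LamS Λ, phiId mu * phiId nu = if mu = nu then phiId mu else 0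
  phiId_mul_bas : ∀ (lam : LamP Λ) (mu nu : LamS Λ) (S : SSTab lam.1 mu.1)
    (T : SSTab lam.1 nu.1) (rho : LamS Λ),
    phiId rho * bas ⟨lam, mu, nu, (S, T)⟩ =
      if rho = mu then bas ⟨lam, mu, nu, (S, T)⟩ else 0
  bas_mul_phiId : ∀ (lam : LamP Λ) (mu nu : LamS Λ) (S : SSTab lam.1 mu.1)
    (T : SSTab lam.1 nu.1) (rho : LamS Λ),
    bas ⟨lam, mu, nu, (S, T)⟩ * phiId rho =
      if rho = nu then bas ⟨lam, mu, nu, (S, T)⟩ else 0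
  cellular : ∀ (a : carrier) (lam : LamP Λ) (mu : LamS Λ) (S : SSTab lam.1 mu.1),
    ∃ c : (Σ mu' : LamS Λ, SSTab lam.1 mu'.1) → R,
      ∀ (nu : LamS Λ) (T : SSTab lam.1 nu.1),
        a * bas ⟨lam, mu, nu, (S, T)⟩ -
            ∑ x : Σ mu' : LamS Λ, SSTab lam.1 mu'.1,
              c x • bas ⟨lam, x.1, nu, (x.2, T)⟩ ∈
          Submodule.span R
            {y : carrier | ∃ (lam' : LamP Λ) (mu' nu' : LamS Λ)
              (S' : SSTab lam'.1 mu'.1) (T' : SSTab lam'.1 nu'.1),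
              MultiComp.SDominates lam'.1 lam.1 ∧
              y = bas ⟨lam', mu', nu', (S', T')⟩}

namespace SchurAlgebra

variable {R : Type} [CommRing R] {n r : ℕ} {m : Fin r → ℕ}
variable {Λ : Finset (MultiComp n r m)}

instance (SA : SchurAlgebra R Λ) : Ring SA.carrier := SA.ringI
instance (SA : SchurAlgebra R Λ) : Algebra R SA.carrier := SA.algI

/-- the two-sided ideal `S(Λ)^{∨λ}`, spanned by the `φ_{S,T}` of shape strictly
dominating `λ` -/
def SVee (SA : SchurAlgebra R Λ) (lam : LamP Λ) : Submodule R SA.carrier :=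
  Submodule.span R
    {y : SA.carrier | ∃ (lam' : LamP Λ) (mu' nu' : LamS Λ)
      (S' : SSTab lam'.1 mu'.1) (T' : SSTab lam'.1 nu'.1),
      MultiComp.SDominates lam'.1 lam.1 ∧ y = SA.bas ⟨lam', mu', nu', (S', T')⟩}

end SchurAlgebra

/-! ## The parabolic subalgebra `S^p` and its combinatorics -/

section PLayer

variable {R : Type} [CommRing R] {n r g : ℕ} {m : Fin r → ℕ}
variable {Λ : Finset (MultiComp n r m)}

/-- a semistandard tableau of shape `λ` together with its type `μ`,
i.e. an element of `T₀(λ) = ⋃_{μ ∈ Λ} T₀(λ,μ)` -/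
abbrev TabOf (Λ : Finset (MultiComp n r m)) (lam : LamP Λ) :=
  Σ mu : LamS Λ, SSTab lam.1 mu.1

/-- the condition defining `T₀^p(λ,μ) ⊆ T₀(λ,μ)`: `a_p(λ) = a_p(μ)` -/
def pCond (P : BlockCtx r g) (lam : LamP Λ) (x : TabOf Λ lam) : Prop :=
  P.aP x.1.1 = P.aP lam.1

instance (P : BlockCtx r g) (lam : LamP Λ) (x : TabOf Λ lam) :
    Decidable (pCond P lam x) := by
  unfold pCond; infer_instance

/-- `T₀^p(λ)`, the tableaux whose type has the same `a_p` as the shape -/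
abbrev PTab (P : BlockCtx r g) (lam : LamP Λ) := {x : TabOf Λ lam // pCond P lam x}

/-- `x` is the canonical tableau `T^λ = λ(t^λ)` of shape and type `λ` -/
def IsCanonical (lam : LamP Λ) (x : TabOf Λ lam) : Prop :=
  x.1.1 = lam.1 ∧ ∀ c : lam.1.Cell, x.2.entry c = ⟨c.1, c.2.1⟩

namespace SchurAlgebra

/-- the subset `Z^p` of the cellular basis: those `φ_{S,T}` with `S ∈ T₀(λ,μ)`,
`T ∈ T₀(λ,ν)` such that `a_p(λ) > a_p(μ)` whenever `α_p(μ) ≠ α_p(ν)` -/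
def ZpSet (SA : SchurAlgebra R Λ) (P : BlockCtx r g) : Set SA.carrier :=
  {x | ∃ (lam : LamP Λ) (mu nu : LamS Λ) (S : SSTab lam.1 mu.1) (T : SSTab lam.1 nu.1),
    (P.alphaP mu.1 ≠ P.alphaP nu.1 → vecLT (P.aP mu.1) (P.aP lam.1)) ∧
    x = SA.bas ⟨lam, mu, nu, (S, T)⟩}

/-- the subset `Z^p \ {φ_{S,T} : S, T ∈ T₀^p(λ)}` spanning the two-sided ideal
`\hat S^p` of `S^p` -/
def ZpHatSet (SA : SchurAlgebra R Λ) (P : BlockCtx r g) : Set SA.carrier :=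
  {x | ∃ (lam : LamP Λ) (mu nu : LamS Λ) (S : SSTab lam.1 mu.1) (T : SSTab lam.1 nu.1),
    (P.alphaP mu.1 ≠ P.alphaP nu.1 → vecLT (P.aP mu.1) (P.aP lam.1)) ∧
    ¬(P.aP mu.1 = P.aP lam.1 ∧ P.aP nu.1 = P.aP lam.1) ∧
    x = SA.bas ⟨lam, mu, nu, (S, T)⟩}

end SchurAlgebra

/-- the index set `Σ^p ⊆ Λ⁺ × {0,1}`, where `(λ,1)` is kept only if there exists
`μ ∈ Λ` with `a_p(λ) > a_p(μ)` and `T₀(λ,μ) ≠ ∅` -/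
def SigmaPIdx (Λ : Finset (MultiComp n r m)) (P : BlockCtx r g) :=
  {e : LamP Λ × Bool // e.2 = true →
    ∃ mu : LamS Λ, vecLT (P.aP mu.1) (P.aP e.1.1) ∧ Nonempty (SSTab e.1.1 mu.1)}

/-- the partial order on `Σ^p`: `(λ₁,ε₁) > (λ₂,ε₂)` iff `λ₁ ⊳ λ₂`, or `λ₁ = λ₂`
and `ε₁ > ε₂` -/
def sigmaGT (P : BlockCtx r g) (e f : SigmaPIdx Λ P) : Prop :=
  MultiComp.SDominates e.1.1.1 f.1.1.1 ∨
    (e.1.1 = f.1.1 ∧ e.1.2 = true ∧ f.1.2 = false)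

/-- the element `(λ, 0)` of `Σ^p` -/
def eZero (P : BlockCtx r g) (lam : LamP Λ) : SigmaPIdx Λ P :=
  ⟨(lam, false), fun h => (Bool.false_ne_true h).elim⟩

/-- the index set `I^p(ε)`: `T₀^p(λ)` for `ε = (λ,0)`, and
`⋃ {T₀(λ,μ) : a_p(λ) > a_p(μ)}` for `ε = (λ,1)` -/
def pIp (P : BlockCtx r g) (e : SigmaPIdx Λ P) : Set (TabOf Λ e.1.1) :=
  {x | (e.1.2 = true ∧ vecLT (P.aP x.1.1) (P.aP e.1.1.1)) ∨
       (e.1.2 = false ∧ pCond P e.1.1 x)}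

/-- the index set `J^p(ε)`: `T₀^p(λ)` for `ε = (λ,0)`, and `T₀(λ)` for `ε = (λ,1)` -/
def pJp (P : BlockCtx r g) (e : SigmaPIdx Λ P) : Set (TabOf Λ e.1.1) :=
  {x | e.1.2 = true ∨ pCond P e.1.1 x}

instance (P : BlockCtx r g) (e : SigmaPIdx Λ P) :
    DecidablePred (· ∈ pIp (Λ := Λ) P e) := fun x =>
  decidable_of_iff ((e.1.2 = true ∧ vecLT (P.aP x.1.1) (P.aP e.1.1.1)) ∨
    (e.1.2 = false ∧ pCond P e.1.1 x)) Iff.rfl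

instance (P : BlockCtx r g) (e : SigmaPIdx Λ P) :
    DecidablePred (· ∈ pJp (Λ := Λ) P e) := fun x =>
  decidable_of_iff (e.1.2 = true ∨ pCond P e.1.1 x) Iff.rfl

namespace SchurAlgebra

/-- the set `Z^p(ε) = {φ_{S,T} : S ∈ I^p(ε), T ∈ J^p(ε)}` -/
def ZpAt (SA : SchurAlgebra R Λ) (P : BlockCtx r g) (e : SigmaPIdx Λ P) :
    Set SA.carrier :=
  {x | ∃ S ∈ pIp P e, ∃ T ∈ pJp P e, x = SA.bas ⟨e.1.1, S.1, T.1, (S.2, T.2)⟩}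

/-- the ideal `(S^p)^{∨ε}`, spanned by the `Z^p(ε')` for `ε' > ε` -/
def SpVee (SA : SchurAlgebra R Λ) (P : BlockCtx r g) (e : SigmaPIdx Λ P) :
    Submodule R SA.carrier :=
  Submodule.span R (⋃ e' : {f : SigmaPIdx Λ P // sigmaGT P f e}, SA.ZpAt P e'.1)

end SchurAlgebra

end PLayer
/-! ## Based right modules and composition multiplicities -/

/-- a right `A`-module which is free as an `R`-module with a distinguished basis
indexed by `ι`; right `A`-modules are treated as left `Aᵐᵒᵖ`-modules -/
structure BasedRightModule (R : Type) [CommRing R] (A : Type) [Ring A]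
    [Algebra R A] (ι : Type) where
  M : Type
  [abGrp : AddCommGroup M]
  [modR : Module R M]
  [modA : Module Aᵐᵒᵖ M]
  [tower : IsScalarTower R Aᵐᵒᵖ M]
  bas : Module.Basis ι R M

namespace BasedRightModule

variable {R : Type} [CommRing R] {A : Type} [Ring A] [Algebra R A] {ι : Type}

instance (X : BasedRightModule R A ι) : AddCommGroup X.M := X.abGrp
instance (X : BasedRightModule R A ι) : Module R X.M := X.modR
instance (X : BasedRightModule R A ι) : Module Aᵐᵒᵖ X.M := X.modA
instance (X : BasedRightModule R A ι) : IsScalarTower R Aᵐᵒᵖ X.M := X.tower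

end BasedRightModule

/-- `N` is the radical of the bilinear form on the based module `X` whose Gram
matrix in the distinguished basis is `f` -/
def IsFormRadical {R : Type} [CommRing R] {A : Type} [Ring A] [Algebra R A]
    {ι : Type} [Fintype ι] (X : BasedRightModule R A ι) (f : ι → ι → R)
    (N : Submodule Aᵐᵒᵖ X.M) : Prop :=
  ∀ x : X.M, x ∈ N ↔ ∀ t : ι, (∑ s : ι, X.bas.repr x s * f s t) = 0

open Classical in
/-- the number of factors of the composition series `s` isomorphic to `L`: the
multiplicity `[M : L]` when `s` runs from `⊥` to `⊤` -/
noncomputable def factorMult {A : Type} [Ring A] {M : Type} [AddCommGroup M]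
    [Module A M] (s : CompositionSeries (Submodule A M)) (L : Type)
    [AddCommGroup L] [Module A L] : ℕ :=
  (Finset.univ.filter fun i : Fin s.length =>
    Nonempty ((↥(s i.succ) ⧸ Submodule.comap (s i.succ).subtype (s i.castSucc))
      ≃ₗ[A] L)).card

/-- a composition series of the full module: from `⊥` to `⊤` -/
def IsFullSeries {A : Type} [Ring A] {M : Type} [AddCommGroup M] [Module A M]
    (s : CompositionSeries (Submodule A M)) : Prop :=
  s.head = ⊥ ∧ s.last = ⊤
/-! ## The quotient algebra `\bar S^p` -/

section BarLayer

variable {R : Type} [CommRing R] {n r g : ℕ} {m : Fin r → ℕ}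
variable {Λ : Finset (MultiComp n r m)}

/-- Abstract datum of the quotient algebra `\bar S^p = S^p / \hat S^p`:
an `R`-algebra `B` together with the surjective projection `proj : S^p → B`,
whose kernel is the span of `Z^p \ {φ_{S,T} : S, T ∈ T₀^p(λ)}`, and the images
`\barφ_{S,T}` (`barphi`) of the basis elements, which form an `R`-basis of `B`. -/
structure BarSchurAlgebra {R : Type} [CommRing R] {n r : ℕ} {m : Fin r → ℕ}
    {Λ : Finset (MultiComp n r m)} {g : ℕ} (SA : SchurAlgebra R Λ)
    (P : BlockCtx r g) (Sp : Subalgebra R SA.carrier) where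
  B : Type
  [ringB : Ring B]
  [algB : Algebra R B]
  proj : ↥Sp →ₐ[R] B
  surj : Function.Surjective proj
  barphi : (lam : LamP Λ) → PTab P lam → PTab P lam → B
  bbas : Module.Basis (Σ lam : LamP Λ, PTab P lam × PTab P lam) R B
  bbas_eq : ∀ (lam : LamP Λ) (S T : PTab P lam), bbas ⟨lam, (S, T)⟩ = barphi lam S T
  proj_bas : ∀ (lam : LamP Λ) (mu nu : LamS Λ) (S : SSTab lam.1 mu.1)
    (T : SSTab lam.1 nu.1) (x : ↥Sp),
    (x : SA.carrier) = SA.bas ⟨lam, mu, nu, (S, T)⟩ →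
    proj x = if h : pCond P lam ⟨mu, S⟩ ∧ pCond P lam ⟨nu, T⟩
      then barphi lam ⟨⟨mu, S⟩, h.1⟩ ⟨⟨nu, T⟩, h.2⟩ else 0
  ker_char : ∀ x : ↥Sp, proj x = 0 ↔ (x : SA.carrier) ∈
    Submodule.span R (SA.ZpHatSet P)

namespace BarSchurAlgebra

variable {SA : SchurAlgebra R Λ} {P : BlockCtx r g} {Sp : Subalgebra R SA.carrier}

instance (BA : BarSchurAlgebra SA P Sp) : Ring BA.B := BA.ringB
instance (BA : BarSchurAlgebra SA P Sp) : Algebra R BA.B := BA.algB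

/-- the two-sided ideal `(\bar S^p)^{∨λ}`, spanned by the `\barφ_{S,T}` of shape
strictly dominating `λ` -/
def BarVee (BA : BarSchurAlgebra SA P Sp) (lam : LamP Λ) : Submodule R BA.B :=
  Submodule.span R {y : BA.B | ∃ (lam' : LamP Λ) (S T : PTab P lam'),
    MultiComp.SDominates lam'.1 lam.1 ∧ y = BA.barphi lam' S T}

end BarSchurAlgebra

/-! ## Characterizations of the various Weyl modules -/

namespace SchurAlgebra

/-- `W` is the Weyl module `W^λ` of `S(Λ)`: its basis `{φ_T}` is indexed by
`T₀(λ)` and the right action is the one inherited from multiplication in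
`S(Λ)` modulo `S(Λ)^{∨λ}`. -/
def IsWeylModule (SA : SchurAlgebra R Λ) (lam : LamP Λ)
    (W : BasedRightModule R SA.carrier (TabOf Λ lam)) : Prop :=
  ∀ (S T : TabOf Λ lam) (a : SA.carrier),
    SA.bas ⟨lam, S.1, T.1, (S.2, T.2)⟩ * a -
        ∑ T' : TabOf Λ lam, (W.bas.repr (MulOpposite.op a • W.bas T) T') •
          SA.bas ⟨lam, S.1, T'.1, (S.2, T'.2)⟩ ∈ SA.SVee lam

/-- `f` is the canonical bilinear form of the Weyl module `W^λ`, determined by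
`φ_{T^λ,S} φ_{T,T^λ} ≡ ⟨φ_S, φ_T⟩ φ_{T^λ,T^λ} mod S(Λ)^{∨λ}`; here `tc` is the
canonical tableau `T^λ`. -/
def IsWeylForm (SA : SchurAlgebra R Λ) (lam : LamP Λ) (tc : TabOf Λ lam)
    (f : TabOf Λ lam → TabOf Λ lam → R) : Prop :=
  ∀ S T : TabOf Λ lam,
    SA.bas ⟨lam, tc.1, S.1, (tc.2, S.2)⟩ * SA.bas ⟨lam, T.1, tc.1, (T.2, tc.2)⟩ -
      f S T • SA.bas ⟨lam, tc.1, tc.1, (tc.2, tc.2)⟩ ∈ SA.SVee lam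

/-- `Z` is the standard right `S^p`-module `Z_p^ε` attached to `ε ∈ Σ^p`: its
basis `{φ_T^ε}` is indexed by `J^p(ε)` and the right `S^p`-action is inherited
from multiplication in `S^p` modulo `(S^p)^{∨ε}`. -/
def IsZpModule (SA : SchurAlgebra R Λ) (P : BlockCtx r g)
    (Sp : Subalgebra R SA.carrier) (e : SigmaPIdx Λ P)
    (Z : BasedRightModule R ↥Sp {x : TabOf Λ e.1.1 // x ∈ pJp P e}) : Prop :=
  ∀ (S : {x : TabOf Λ e.1.1 // x ∈ pIp P e})
    (T : {x : TabOf Λ e.1.1 // x ∈ pJp P e}) (a : ↥Sp),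
    SA.bas ⟨e.1.1, S.1.1, T.1.1, (S.1.2, T.1.2)⟩ * (a : SA.carrier) -
        ∑ T' : {x : TabOf Λ e.1.1 // x ∈ pJp P e},
          (Z.bas.repr (MulOpposite.op a • Z.bas T) T') •
            SA.bas ⟨e.1.1, S.1.1, T'.1.1, (S.1.2, T'.1.2)⟩ ∈ SA.SpVee P e

/-- `f` is the canonical bilinear pairing `β_ε` between `◇Z_p^ε` and `Z_p^ε`,
determined by `φ_{U,T} φ_{S,V} ≡ β_ε(φ_S^ε, φ_T^ε) φ_{U,V} mod (S^p)^{∨ε}`. -/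
def IsBetaForm (SA : SchurAlgebra R Λ) (P : BlockCtx r g) (e : SigmaPIdx Λ P)
    (f : {x : TabOf Λ e.1.1 // x ∈ pIp P e} →
      {x : TabOf Λ e.1.1 // x ∈ pJp P e} → R) : Prop :=
  ∀ (U : {x : TabOf Λ e.1.1 // x ∈ pIp P e})
    (T : {x : TabOf Λ e.1.1 // x ∈ pJp P e})
    (S : {x : TabOf Λ e.1.1 // x ∈ pIp P e})
    (V : {x : TabOf Λ e.1.1 // x ∈ pJp P e}),
    SA.bas ⟨e.1.1, U.1.1, T.1.1, (U.1.2, T.1.2)⟩ *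
        SA.bas ⟨e.1.1, S.1.1, V.1.1, (S.1.2, V.1.2)⟩ -
      f S T • SA.bas ⟨e.1.1, U.1.1, V.1.1, (U.1.2, V.1.2)⟩ ∈ SA.SpVee P e

/-- `N` is the radical `rad Z_p^ε` of the pairing `β_ε` (with Gram matrix `f`). -/
def IsBetaRadical (SA : SchurAlgebra R Λ) (P : BlockCtx r g)
    (Sp : Subalgebra R SA.carrier) (e : SigmaPIdx Λ P)
    (Z : BasedRightModule R ↥Sp {x : TabOf Λ e.1.1 // x ∈ pJp P e})
    (f : {x : TabOf Λ e.1.1 // x ∈ pIp P e} →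
      {x : TabOf Λ e.1.1 // x ∈ pJp P e} → R)
    (N : Submodule (↥Sp)ᵐᵒᵖ Z.M) : Prop :=
  ∀ y : Z.M, y ∈ N ↔ ∀ S : {x : TabOf Λ e.1.1 // x ∈ pIp P e},
    (∑ T : {x : TabOf Λ e.1.1 // x ∈ pJp P e}, Z.bas.repr y T * f S T) = 0

end SchurAlgebra

namespace BarSchurAlgebra

variable {SA : SchurAlgebra R Λ} {P : BlockCtx r g} {Sp : Subalgebra R SA.carrier}

/-- `Z` is the Weyl (cell) module `\bar Z_p^λ` of the cellular algebra `\bar S^p`: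
its basis `{\barφ_T}` is indexed by `T₀^p(λ)` and the right action is inherited
from multiplication in `\bar S^p` modulo `(\bar S^p)^{∨λ}`. -/
def IsBarWeyl (BA : BarSchurAlgebra SA P Sp) (lam : LamP Λ)
    (Z : BasedRightModule R BA.B (PTab P lam)) : Prop :=
  ∀ (S T : PTab P lam) (b : BA.B),
    BA.barphi lam S T * b - ∑ T' : PTab P lam,
        (Z.bas.repr (MulOpposite.op b • Z.bas T) T') • BA.barphi lam S T' ∈
      BA.BarVee lam

/-- `f` is the canonical symmetric bilinear form `⟨·,·⟩_p` on `\bar Z_p^λ`,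
determined by `\barφ_{T^λ,S} \barφ_{T,T^λ} ≡ ⟨\barφ_S, \barφ_T⟩_p \barφ_{T^λ,T^λ}
mod (\bar S^p)^{∨λ}`; `tc` is the canonical tableau `T^λ`. -/
def IsBarForm (BA : BarSchurAlgebra SA P Sp) (lam : LamP Λ) (tc : PTab P lam)
    (f : PTab P lam → PTab P lam → R) : Prop :=
  ∀ S T : PTab P lam,
    BA.barphi lam tc S * BA.barphi lam T tc - f S T • BA.barphi lam tc tc ∈
      BA.BarVee lam

end BarSchurAlgebra

end BarLayer
/-! ## The Ariki–Koike algebra -/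

/-- the defining relations of the Ariki–Koike algebra `H_{n,r}` on the generators
`T_0, T_1, …, T_{n-1}` (generator `i : Fin n` is `T_i`) -/
inductive ArikiKoikeRel (R : Type) [CommRing R] (n r : ℕ) (q : Rˣ) (Q : Fin r → R) :
    FreeAlgebra R (Fin n) → FreeAlgebra R (Fin n) → Prop
  | cyclotomic (h : 0 < n) :
      ArikiKoikeRel R n r q Q
        (((List.finRange r).map fun j =>
          FreeAlgebra.ι R (⟨0, h⟩ : Fin n) - algebraMap R _ (Q j)).prod) 0
  | quadratic (i : Fin n) (hi : i.1 ≠ 0) :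
      ArikiKoikeRel R n r q Q
        ((FreeAlgebra.ι R i - algebraMap R _ (q : R)) *
          (FreeAlgebra.ι R i + algebraMap R _ ((q⁻¹ : Rˣ) : R))) 0
  | braid0 (h : 1 < n) :
      ArikiKoikeRel R n r q Q
        (FreeAlgebra.ι R (⟨0, Nat.lt_of_lt_of_le Nat.zero_lt_one h.le⟩ : Fin n) *
          FreeAlgebra.ι R (⟨1, h⟩ : Fin n) *
          FreeAlgebra.ι R (⟨0, Nat.lt_of_lt_of_le Nat.zero_lt_one h.le⟩ : Fin n) *
          FreeAlgebra.ι R (⟨1, h⟩ : Fin n))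
        (FreeAlgebra.ι R (⟨1, h⟩ : Fin n) *
          FreeAlgebra.ι R (⟨0, Nat.lt_of_lt_of_le Nat.zero_lt_one h.le⟩ : Fin n) *
          FreeAlgebra.ι R (⟨1, h⟩ : Fin n) *
          FreeAlgebra.ι R (⟨0, Nat.lt_of_lt_of_le Nat.zero_lt_one h.le⟩ : Fin n))
  | braid (i j : Fin n) (hi : i.1 ≠ 0) (hij : j.1 = i.1 + 1) :
      ArikiKoikeRel R n r q Q
        (FreeAlgebra.ι R i * FreeAlgebra.ι R j * FreeAlgebra.ι R i)
        (FreeAlgebra.ι R j * FreeAlgebra.ι R i * FreeAlgebra.ι R j)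
  | comm (i j : Fin n) (hij : i.1 + 1 < j.1) :
      ArikiKoikeRel R n r q Q
        (FreeAlgebra.ι R i * FreeAlgebra.ι R j)
        (FreeAlgebra.ι R j * FreeAlgebra.ι R i)

/-- the Ariki–Koike algebra `H_{n,r}` over `R` with parameters
`q, Q_1, …, Q_r` (with `q` invertible) -/
abbrev ArikiKoike (R : Type) [CommRing R] (n r : ℕ) (q : Rˣ) (Q : Fin r → R) :=
  RingQuot (ArikiKoikeRel R n r q Q)

/-! ## Corners `e·B·e` at an idempotent -/

/-- an idempotent element of a ring -/
structure IdemElem (B : Type) [Ring B] where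
  e : B
  idem : e * e = e

/-- the corner `{x : B | e x e = x}` of `B` at the idempotent `e`;
for `e = \barφ_Ω` this is the modified Ariki–Koike algebra
`\bar H^p = \barφ_Ω ⬝ \bar S^p ⬝ \barφ_Ω` of type `p` -/
def Corner {B : Type} [Ring B] (E : IdemElem B) := {x : B // E.e * x * E.e = x}

namespace Corner

variable {B : Type} [Ring B] {E : IdemElem B}

instance : Add (Corner E) :=
  ⟨fun x y => ⟨x.1 + y.1, by rw [mul_add, add_mul, x.2, y.2]⟩⟩

instance : Mul (Corner E) :=
  ⟨fun x y => ⟨x.1 * y.1, by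
    have hx : E.e * x.1 = x.1 := by
      nth_rewrite 1 [← x.2]
      rw [← mul_assoc, ← mul_assoc, E.idem, x.2]
    have hy : y.1 * E.e = y.1 := by
      nth_rewrite 1 [← y.2]
      rw [mul_assoc, E.idem, y.2]
    rw [← mul_assoc, hx, mul_assoc, hy]⟩⟩

instance : Zero (Corner E) := ⟨⟨0, by simp⟩⟩

instance : Neg (Corner E) := ⟨fun x => ⟨-x.1, by rw [mul_neg, neg_mul, x.2]⟩⟩

/-- the identity element `e` of the corner -/
def one (E : IdemElem B) : Corner E :=
  ⟨E.e, by rw [E.idem, E.idem]⟩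

instance {R : Type} [CommRing R] [Algebra R B] : SMul R (Corner E) :=
  ⟨fun c x => ⟨c • x.1, by rw [mul_smul_comm, smul_mul_assoc, x.2]⟩⟩

@[simp] theorem add_val (x y : Corner E) : (x + y).1 = x.1 + y.1 := rfl
@[simp] theorem mul_val (x y : Corner E) : (x * y).1 = x.1 * y.1 := rfl
@[simp] theorem smul_val {R : Type} [CommRing R] [Algebra R B] (c : R)
    (x : Corner E) : (c • x).1 = c • x.1 := rfl

end Corner

/-! ## The set `Ω` and the blocks of compositions of `n` -/

section OmegaLayer

variable {n r g : ℕ} {m : Fin r → ℕ}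

/-- `ω ∈ Ω`: all the entries of `ω` are `0` or `1`, for each letter
`1 ≤ i ≤ n` the `i`-th rows of the components of `ω` have total size `1`,
and all nonzero rows occur in components which are last in their `p`-block
(this uses `m_k ≥ n` for all `k`). -/
def IsOmega (P : BlockCtx r g) (hm : ∀ k, n ≤ m k) (om : MultiComp n r m) : Prop :=
  (∀ (k : Fin r) (i : Fin (m k)), om.part k i ≤ 1) ∧
  (∀ i : Fin n,
    (∑ k : Fin r, om.part k ⟨i.1, Nat.lt_of_lt_of_le i.2 (hm k)⟩) = 1) ∧
  (∀ (k : Fin r) (i : Fin (m k)), om.part k i = 1 →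
    ∀ k' : Fin r, P.π k' = P.π k → k' ≤ k)

instance (P : BlockCtx r g) (hm : ∀ k, n ≤ m k) (om : MultiComp n r m) :
    Decidable (IsOmega P hm om) := by
  unfold IsOmega; infer_instance

/-- the set `D_{n,g}` of tuples `(n₁, …, n_g)` of non-negative integers summing
to `n` -/
def DComp (n g : ℕ) := {f : Fin g → ℕ // ∑ b, f b = n}

end OmegaLayer

/-! ## Statement 4 (Shoji–Wada, Lemma 3.2)

(i) For `λ ∈ Λ⁺`, the map `φ_T^{(λ,0)} ↦ \barφ_T` is an isomorphism
`Z_p^{(λ,0)} ≅ \bar Z_p^λ` of right `S^p`-modules (where `\bar S^p`-modules are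
seen as `S^p`-modules through `π : S^p → \bar S^p`).
(ii) If `R` is a field, this map induces an isomorphism
`L_p^{(λ,0)} ≅ \bar L_p^λ` of `S^p`-modules. -/

section Helpers

theorem aP_eq_imp_alphaP_eq {n r g : ℕ} {m : Fin r → ℕ} (P : BlockCtx r g)
    (mu nu : MultiComp n r m) (h : P.aP mu = P.aP nu) :
    P.alphaP mu = P.alphaP nu := by
  have key : ∀ (ξ : MultiComp n r m) (b : Fin g),
      P.aP ξ b + P.alphaP ξ b
        = ∑ k ∈ Finset.univ.filter fun k => P.π k ≤ b, ξ.compSize k := by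
    intro ξ b
    rw [← Finset.sum_filter_add_sum_filter_not
      (Finset.univ.filter fun k => P.π k ≤ b) (fun k => P.π k < b)]
    congr 1
    · unfold BlockCtx.aP
      apply Finset.sum_congr _ (fun _ _ => rfl)
      ext k
      simp only [Finset.mem_filter, Finset.mem_univ, true_and]
      exact ⟨fun hk => ⟨le_of_lt hk, hk⟩, And.right⟩
    · unfold BlockCtx.alphaP
      apply Finset.sum_congr _ (fun _ _ => rfl)
      ext k
      simp only [Finset.mem_filter, Finset.mem_univ, true_and]
      exact ⟨fun hk => ⟨le_of_eq hk, by simp [hk]⟩,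
        fun hk => le_antisymm hk.1 (not_lt.mp hk.2)⟩
  have sle : ∀ b : Fin g,
      (∑ k ∈ Finset.univ.filter fun k => P.π k ≤ b, mu.compSize k)
        = ∑ k ∈ Finset.univ.filter fun k => P.π k ≤ b, nu.compSize k := by
    intro b
    by_cases hb : (b : ℕ) + 1 < g
    · have h1 : (Finset.univ.filter fun k => P.π k ≤ b)
          = Finset.univ.filter fun k => P.π k < (⟨(b : ℕ) + 1, hb⟩ : Fin g) := by
        ext k
        simp only [Finset.mem_filter, Finset.mem_univ, true_and, Fin.le_def,
          Fin.lt_def, Nat.lt_succ_iff]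
      rw [h1]
      exact congrFun h ⟨(b : ℕ) + 1, hb⟩
    · have h1 : (Finset.univ.filter fun k => P.π k ≤ b) = Finset.univ := by
        ext k
        simp only [Finset.mem_filter, Finset.mem_univ, true_and, iff_true, Fin.le_def]
        have h2 : (P.π k : ℕ) < g := (P.π k).2
        have h3 : (b : ℕ) < g := b.2
        omega
      rw [h1]
      exact mu.sum_eq.trans nu.sum_eq.symm
  funext b
  have h1 := key mu b
  have h2 := key nu b
  have h3 := congrFun h b
  have h4 := sle b
  omega

variable {R : Type} [CommRing R] {n r g : ℕ} {m : Fin r → ℕ}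
variable {Λ : Finset (MultiComp n r m)}

theorem bas_mem_Sp (SA : SchurAlgebra R Λ) (P : BlockCtx r g)
    (Sp : Subalgebra R SA.carrier)
    (hSp : (Sp : Set SA.carrier) =
      (Submodule.span R (SA.ZpSet P) : Submodule R SA.carrier))
    (lam : LamP Λ) (mu nu : LamS Λ) (S : SSTab lam.1 mu.1) (T : SSTab lam.1 nu.1)
    (hc : P.alphaP mu.1 ≠ P.alphaP nu.1 → vecLT (P.aP mu.1) (P.aP lam.1)) :
    SA.bas ⟨lam, mu, nu, (S, T)⟩ ∈ Sp := by
  have h1 : SA.bas ⟨lam, mu, nu, (S, T)⟩ ∈ SA.ZpSet P := ⟨lam, mu, nu, S, T, hc, rfl⟩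
  have h2 : SA.bas ⟨lam, mu, nu, (S, T)⟩ ∈ (Sp : Set SA.carrier) := by
    rw [hSp]; exact Submodule.subset_span h1
  exact h2

theorem bas_mem_of_pCond (SA : SchurAlgebra R Λ) (P : BlockCtx r g)
    (Sp : Subalgebra R SA.carrier)
    (hSp : (Sp : Set SA.carrier) =
      (Submodule.span R (SA.ZpSet P) : Submodule R SA.carrier))
    (lam : LamP Λ) (mu nu : LamS Λ) (S : SSTab lam.1 mu.1) (T : SSTab lam.1 nu.1)
    (hmu : P.aP mu.1 = P.aP lam.1) (hnu : P.aP nu.1 = P.aP lam.1) :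
    SA.bas ⟨lam, mu, nu, (S, T)⟩ ∈ Sp :=
  bas_mem_Sp SA P Sp hSp lam mu nu S T
    (fun hne => absurd (aP_eq_imp_alphaP_eq P mu.1 nu.1 (hmu.trans hnu.symm)) hne)

theorem proj_mem_BarVee (SA : SchurAlgebra R Λ) (P : BlockCtx r g)
    (Sp : Subalgebra R SA.carrier)
    (hSp : (Sp : Set SA.carrier) =
      (Submodule.span R (SA.ZpSet P) : Submodule R SA.carrier))
    (BA : BarSchurAlgebra SA P Sp) (lam : LamP Λ) (x : ↥Sp)
    (hx : (x : SA.carrier) ∈ SA.SpVee P (eZero P lam)) :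
    BA.proj x ∈ BA.BarVee lam := by
  set V : Submodule R SA.carrier :=
    Submodule.map (Sp.val.toLinearMap)
      ((BA.BarVee lam).comap BA.proj.toLinearMap) with hV
  have hle : SA.SpVee P (eZero P lam) ≤ V := by
    rw [SchurAlgebra.SpVee]
    apply Submodule.span_le.mpr
    rintro z hz
    simp only [Set.mem_iUnion] at hz
    obtain ⟨⟨e', he'⟩, S, hS, T, hT, rfl⟩ := hz
    -- membership of the basis element in Sp
    have hmem : SA.bas ⟨e'.1.1, S.1, T.1, (S.2, T.2)⟩ ∈ Sp := by
      cases hS with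
      | inl h1 => exact bas_mem_Sp SA P Sp hSp e'.1.1 S.1 T.1 S.2 T.2 (fun _ => h1.2)
      | inr h1 =>
        have hT' : pCond P e'.1.1 T :=
          hT.resolve_left (by rw [h1.1]; exact Bool.false_ne_true)
        exact bas_mem_of_pCond SA P Sp hSp e'.1.1 S.1 T.1 S.2 T.2 h1.2 hT'
    refine ⟨⟨_, hmem⟩, ?_, rfl⟩
    show BA.proj ⟨_, hmem⟩ ∈ BA.BarVee lam
    rw [BA.proj_bas e'.1.1 S.1 T.1 S.2 T.2 _ rfl]
    by_cases hcond : pCond P e'.1.1 ⟨S.1, S.2⟩ ∧ pCond P e'.1.1 ⟨T.1, T.2⟩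
    · rw [dif_pos hcond]
      have hdom : MultiComp.SDominates e'.1.1.1 lam.1 := by
        cases he' with
        | inl hd => exact hd
        | inr hd =>
          exfalso
          cases hS with
          | inl hS1 => exact hS1.2.2 hcond.1
          | inr hS1 => exact absurd (hd.2.1.symm.trans hS1.1) (by simp)
      exact Submodule.subset_span ⟨e'.1.1, _, _, hdom, rfl⟩
    · rw [dif_neg hcond]
      exact Submodule.zero_mem _
  obtain ⟨y, hy, hyx⟩ := hle hx
  have hxy : y = x := Subtype.ext hyx
  rw [← hxy]
  exact hy

theorem barVee_repr_eq_zero {SA : SchurAlgebra R Λ} {P : BlockCtx r g}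
    {Sp : Subalgebra R SA.carrier} (BA : BarSchurAlgebra SA P Sp) (lam : LamP Λ)
    {z : BA.B} (hz : z ∈ BA.BarVee lam) (S T : PTab P lam) :
    BA.bbas.repr z ⟨lam, (S, T)⟩ = 0 := by
  have hle : BA.BarVee lam ≤ Submodule.span R
      (BA.bbas '' {i : Σ lam' : LamP Λ, PTab P lam' × PTab P lam' |
        MultiComp.SDominates i.1.1 lam.1}) := by
    apply Submodule.span_le.mpr
    rintro y ⟨lam', S', T', hdom, rfl⟩
    exact Submodule.subset_span ⟨⟨lam', (S', T')⟩, hdom, BA.bbas_eq lam' S' T'⟩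
  have h2 := (BA.bbas.mem_span_image).mp (hle hz)
  by_contra hne
  have h3 := h2 (Finset.mem_coe.mpr (Finsupp.mem_support_iff.mpr hne))
  exact h3.2 rfl

theorem barVee_sum_coeff_zero {SA : SchurAlgebra R Λ} {P : BlockCtx r g}
    {Sp : Subalgebra R SA.carrier} (BA : BarSchurAlgebra SA P Sp) (lam : LamP Λ)
    (S0 : PTab P lam) (cf : PTab P lam → R)
    (h : (∑ T : PTab P lam, cf T • BA.barphi lam S0 T) ∈ BA.BarVee lam) :
    ∀ T, cf T = 0 := by
  intro T0
  have h1 := barVee_repr_eq_zero BA lam h S0 T0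
  have h2 : BA.bbas.repr (∑ T : PTab P lam, cf T • BA.barphi lam S0 T)
      ⟨lam, (S0, T0)⟩ = cf T0 := by
    simp only [← BA.bbas_eq]
    rw [map_sum, Finsupp.finset_sum_apply]
    simp only [map_smul, Finsupp.smul_apply, Module.Basis.repr_self, smul_eq_mul]
    rw [Finset.sum_eq_single T0]
    · simp
    · intro T _ hne
      rw [Finsupp.single_apply, if_neg, mul_zero]
      intro hEq
      apply hne
      have h4 := (Sigma.mk.inj_iff.mp hEq).2
      have h5 : (S0, T) = (S0, T0) := eq_of_heq h4
      exact (Prod.mk.injEq _ _ _ _ ▸ h5).2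
    · simp
  rw [h2] at h1
  exact h1

theorem barVee_smul_coeff_zero {SA : SchurAlgebra R Λ} {P : BlockCtx r g}
    {Sp : Subalgebra R SA.carrier} (BA : BarSchurAlgebra SA P Sp) (lam : LamP Λ)
    (S0 T0 : PTab P lam) (c : R)
    (h : c • BA.barphi lam S0 T0 ∈ BA.BarVee lam) : c = 0 := by
  have h0 : (∑ T : PTab P lam, (if T = T0 then c else 0) • BA.barphi lam S0 T)
      = c • BA.barphi lam S0 T0 := by
    rw [Finset.sum_eq_single T0]
    · simp
    · intro T _ hne; simp [hne]
    · simp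
  have := barVee_sum_coeff_zero BA lam S0 (fun T => if T = T0 then c else 0)
    (h0 ▸ h) T0
  simpa using this

theorem op_smul_smul_comm {R A M : Type} [CommRing R] [Ring A] [Algebra R A]
    [AddCommGroup M] [Module R M] [Module Aᵐᵒᵖ M] [IsScalarTower R Aᵐᵒᵖ M]
    (a : Aᵐᵒᵖ) (r : R) (x : M) : a • (r • x) = r • (a • x) := by
  calc a • (r • x) = a • ((r • (1 : Aᵐᵒᵖ)) • x) := by rw [smul_assoc, one_smul]
    _ = (a * (r • (1 : Aᵐᵒᵖ))) • x := by rw [mul_smul]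
    _ = (r • (a * 1)) • x := by rw [mul_smul_comm]
    _ = (r • a) • x := by rw [mul_one]
    _ = r • (a • x) := smul_assoc r a x

end Helpers
set_option maxHeartbeats 1000000 in
theorem Zp0_iso_barZ
    {R : Type} [CommRing R] [IsDomain R] {n r g : ℕ} {m : Fin r → ℕ}
    (hn : 0 < n) (hr : 0 < r) (hm : ∀ k, 0 < m k)
    {Λ : Finset (MultiComp n r m)} (hΛ : Saturated Λ)
    (SA : SchurAlgebra R Λ) (P : BlockCtx r g)
    (Sp : Subalgebra R SA.carrier)
    (hSp : (Sp : Set SA.carrier) =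
      (Submodule.span R (SA.ZpSet P) : Submodule R SA.carrier))
    (BA : BarSchurAlgebra SA P Sp)
    (lam : LamP Λ)
    -- the standard module `Z_p^{(λ,0)}` of `S^p`
    (Z0 : BasedRightModule R ↥Sp {x : TabOf Λ lam // x ∈ pJp P (eZero P lam)})
    (hZ0 : SA.IsZpModule P Sp (eZero P lam) Z0)
    -- the Weyl module `\bar Z_p^λ` of `\bar S^p`
    (Zb : BasedRightModule R BA.B (PTab P lam))
    (hZb : BA.IsBarWeyl lam Zb)
    -- the pairing `β_{(λ,0)}` and its radical
    (f0 : {x : TabOf Λ lam // x ∈ pIp P (eZero P lam)} →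
      {x : TabOf Λ lam // x ∈ pJp P (eZero P lam)} → R)
    (hf0 : SA.IsBetaForm P (eZero P lam) f0)
    (N0 : Submodule (↥Sp)ᵐᵒᵖ Z0.M)
    (hN0 : SA.IsBetaRadical P Sp (eZero P lam) Z0 f0 N0)
    -- the canonical form `⟨·,·⟩_p` on `\bar Z_p^λ` and its radical
    (tc : PTab P lam) (htc : IsCanonical lam tc.1)
    (fb : PTab P lam → PTab P lam → R)
    (hfb : BA.IsBarForm lam tc fb)
    (Nb : Submodule BA.Bᵐᵒᵖ Zb.M)
    (hNb : IsFormRadical Zb fb Nb) :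
    -- the `R`-linear equivalence matching the two distinguished bases:
    let eqv : {x : TabOf Λ lam // x ∈ pJp P (eZero P lam)} ≃ PTab P lam :=
      Equiv.subtypeEquivRight (fun x => or_iff_right Bool.false_ne_true)
    let E : Z0.M ≃ₗ[R] Zb.M := Z0.bas.equiv Zb.bas eqv
    -- (i) it is `S^p`-equivariant (an isomorphism of `S^p`-modules)
    (∀ (a : ↥Sp) (x : Z0.M),
      E (MulOpposite.op a • x) = MulOpposite.op (BA.proj a) • E x) ∧
    -- (ii) if `R` is a field, it induces an `S^p`-equivariant isomorphism
    -- `L_p^{(λ,0)} ≅ \bar L_p^λ`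
    (IsField R →
      ∃ F : (Z0.M ⧸ N0) ≃ₗ[R] (Zb.M ⧸ Nb),
        (∀ x : Z0.M,
          F (Submodule.Quotient.mk x) = Submodule.Quotient.mk (E x)) ∧
        ∀ (a : ↥Sp) (y : Z0.M ⧸ N0),
          F (MulOpposite.op a • y) = MulOpposite.op (BA.proj a) • F y) := by
    classical
  letI : DecidablePred (fun x : TabOf Λ lam => x ∈ pJp P (eZero P lam)) :=
    fun x => instDecidablePredTabOfFstLamPBoolValProdForallEqSndTrueExistsLamSAndVecLTAPMultiCompMemFinsetIsPartitionNonemptySSTabSetPJp P (eZero P lam) x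
  intro eqv E
  have hEdef : E = Z0.bas.equiv Zb.bas eqv := rfl
  have hJc : ∀ T : {x : TabOf Λ lam // x ∈ pJp P (eZero P lam)}, pCond P lam T.1 :=
    fun T => T.2.resolve_left Bool.false_ne_true
  have hIiff : ∀ x : TabOf Λ lam, x ∈ pIp P (eZero P lam) ↔ pCond P lam x := by
    intro x
    constructor
    · rintro (⟨h1, -⟩ | ⟨-, h2⟩)
      · exact absurd h1 Bool.false_ne_true
      · exact h2
    · intro h; exact Or.inr ⟨rfl, h⟩
  let eqvI : {x : TabOf Λ lam // x ∈ pIp P (eZero P lam)} ≃ PTab P lam :=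
    Equiv.subtypeEquivRight hIiff
  have memSp : ∀ S T : PTab P lam,
      SA.bas ⟨lam, S.1.1, T.1.1, (S.1.2, T.1.2)⟩ ∈ Sp := fun S T =>
    bas_mem_of_pCond SA P Sp hSp lam S.1.1 T.1.1 S.1.2 T.1.2 S.2 T.2
  have projSp : ∀ S T : PTab P lam,
      BA.proj ⟨SA.bas ⟨lam, S.1.1, T.1.1, (S.1.2, T.1.2)⟩, memSp S T⟩
        = BA.barphi lam S T := by
    intro S T
    rw [BA.proj_bas lam S.1.1 T.1.1 S.1.2 T.1.2 _ rfl, dif_pos ⟨S.2, T.2⟩]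
  -- the key comparison of structure constants
  have key : ∀ (a : ↥Sp) (T T' : {x : TabOf Λ lam // x ∈ pJp P (eZero P lam)}),
      Z0.bas.repr (op a • Z0.bas T) T'
        = Zb.bas.repr (op (BA.proj a) • Zb.bas (eqv T)) (eqv T') := by
    intro a T T'
    have h0 := hZ0 ⟨tc.1, (hIiff tc.1).mpr tc.2⟩ T a
    have hb := hZb tc (eqv T) (BA.proj a)
    have h1 : BA.barphi lam tc (eqv T) * BA.proj a
        - ∑ T'' : {x : TabOf Λ lam // x ∈ pJp P (eZero P lam)},
            (Z0.bas.repr (op a • Z0.bas T) T'') • BA.barphi lam tc (eqv T'')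
          ∈ BA.BarVee lam := by
      have e1 : BA.barphi lam tc (eqv T) * BA.proj a
          - ∑ T'' : {x : TabOf Λ lam // x ∈ pJp P (eZero P lam)},
              (Z0.bas.repr (op a • Z0.bas T) T'') • BA.barphi lam tc (eqv T'')
          = BA.proj ((⟨SA.bas ⟨lam, tc.1.1, (eqv T).1.1, (tc.1.2, (eqv T).1.2)⟩,
                memSp tc (eqv T)⟩ : ↥Sp) * a
              - ∑ T'' : {x : TabOf Λ lam // x ∈ pJp P (eZero P lam)},
                  (Z0.bas.repr (op a • Z0.bas T) T'')
                    • (⟨SA.bas ⟨lam, tc.1.1, (eqv T'').1.1, (tc.1.2, (eqv T'').1.2)⟩,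
                        memSp tc (eqv T'')⟩ : ↥Sp)) := by
        rw [map_sub BA.proj, map_mul BA.proj, map_sum BA.proj, projSp tc (eqv T)]
        congr 1
        refine Finset.sum_congr rfl fun T'' _ => ?_
        rw [map_smul BA.proj, projSp tc (eqv T'')]
      rw [e1]
      apply proj_mem_BarVee SA P Sp hSp BA lam
      have hval : (((⟨SA.bas ⟨lam, tc.1.1, (eqv T).1.1, (tc.1.2, (eqv T).1.2)⟩,
              memSp tc (eqv T)⟩ : ↥Sp) * a
            - ∑ T'' : {x : TabOf Λ lam // x ∈ pJp P (eZero P lam)},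
                (Z0.bas.repr (op a • Z0.bas T) T'')
                  • (⟨SA.bas ⟨lam, tc.1.1, (eqv T'').1.1, (tc.1.2, (eqv T'').1.2)⟩,
                      memSp tc (eqv T'')⟩ : ↥Sp) : ↥Sp) : SA.carrier)
          = SA.bas ⟨lam, tc.1.1, (eqv T).1.1, (tc.1.2, (eqv T).1.2)⟩ * (a : SA.carrier)
            - ∑ T'' : {x : TabOf Λ lam // x ∈ pJp P (eZero P lam)},
                (Z0.bas.repr (op a • Z0.bas T) T'')
                  • SA.bas ⟨lam, tc.1.1, (eqv T'').1.1, (tc.1.2, (eqv T'').1.2)⟩ := by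
        simp only [MulMemClass.coe_mul, AddSubgroupClass.coe_sub,
          AddSubmonoidClass.coe_finset_sum, SetLike.val_smul]
      rw [hval]
      exact h0
    have hdiff : (∑ s : PTab P lam,
        ((Zb.bas.repr (op (BA.proj a) • Zb.bas (eqv T)) s)
          - (Z0.bas.repr (op a • Z0.bas T) (eqv.symm s))) • BA.barphi lam tc s)
        ∈ BA.BarVee lam := by
      have h3 := Submodule.sub_mem _ h1 hb
      have h4 : (BA.barphi lam tc (eqv T) * BA.proj a
            - ∑ T'' : {x : TabOf Λ lam // x ∈ pJp P (eZero P lam)},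
                (Z0.bas.repr (op a • Z0.bas T) T'') • BA.barphi lam tc (eqv T''))
          - (BA.barphi lam tc (eqv T) * BA.proj a
            - ∑ s : PTab P lam,
                (Zb.bas.repr (op (BA.proj a) • Zb.bas (eqv T)) s) • BA.barphi lam tc s)
          = ∑ s : PTab P lam,
              ((Zb.bas.repr (op (BA.proj a) • Zb.bas (eqv T)) s)
                - (Z0.bas.repr (op a • Z0.bas T) (eqv.symm s))) • BA.barphi lam tc s := by
        have h5 : (∑ T'' : {x : TabOf Λ lam // x ∈ pJp P (eZero P lam)},
              (Z0.bas.repr (op a • Z0.bas T) T'') • BA.barphi lam tc (eqv T''))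
            = ∑ s : PTab P lam,
                (Z0.bas.repr (op a • Z0.bas T) (eqv.symm s)) • BA.barphi lam tc s :=
          Fintype.sum_equiv eqv _ _ (fun T'' => by rw [Equiv.symm_apply_apply])
        rw [h5, sub_sub_sub_cancel_left, ← Finset.sum_sub_distrib]
        exact Finset.sum_congr rfl fun s _ => (sub_smul _ _ _).symm
      rw [h4] at h3
      exact h3
    have hz := barVee_sum_coeff_zero BA lam tc _ hdiff (eqv T')
    rw [Equiv.symm_apply_apply] at hz
    exact (sub_eq_zero.mp hz).symm
  -- part (i)
  have equivariance : ∀ (a : ↥Sp) (x : Z0.M),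
      E (op a • x) = op (BA.proj a) • E x := by
    intro a
    let A0 : Z0.M →ₗ[R] Zb.M :=
      { toFun := fun x => E (op a • x)
        map_add' := fun x y => by
          show E (op a • (x + y)) = E (op a • x) + E (op a • y)
          rw [smul_add, map_add]
        map_smul' := fun c x => by
          show E (op a • (c • x)) = c • E (op a • x)
          rw [op_smul_smul_comm, map_smul] }
    let A1 : Z0.M →ₗ[R] Zb.M :=
      { toFun := fun x => op (BA.proj a) • E x
        map_add' := fun x y => by
          show op (BA.proj a) • E (x + y) = op (BA.proj a) • E x + op (BA.proj a) • E y
          rw [map_add, smul_add]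
        map_smul' := fun c x => by
          show op (BA.proj a) • E (c • x) = c • (op (BA.proj a) • E x)
          rw [map_smul, op_smul_smul_comm] }
    have hA : A0 = A1 := by
      apply Module.Basis.ext Z0.bas
      intro T
      show E (op a • Z0.bas T) = op (BA.proj a) • E (Z0.bas T)
      have l1 : E (op a • Z0.bas T)
          = ∑ T', Z0.bas.repr (op a • Z0.bas T) T' • Zb.bas (eqv T') := by
        conv_lhs => rw [← Module.Basis.sum_repr Z0.bas (op a • Z0.bas T)]
        rw [map_sum E]
        refine Finset.sum_congr rfl fun T' _ => ?_
        rw [map_smul E, hEdef, Module.Basis.equiv_apply]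
      have l2 : op (BA.proj a) • E (Z0.bas T)
          = ∑ s, Zb.bas.repr (op (BA.proj a) • Zb.bas (eqv T)) s • Zb.bas s := by
        rw [hEdef, Module.Basis.equiv_apply]
        exact (Module.Basis.sum_repr Zb.bas _).symm
      rw [l1, l2,
        ← Equiv.sum_comp eqv (fun s =>
          Zb.bas.repr (op (BA.proj a) • Zb.bas (eqv T)) s • Zb.bas s)]
      exact Finset.sum_congr rfl fun T' _ => by rw [key a T T']
    intro x
    exact LinearMap.congr_fun hA x
  refine ⟨equivariance, fun _ => ?_⟩
  -- part (ii)
  have key2 : ∀ (S : {x : TabOf Λ lam // x ∈ pIp P (eZero P lam)})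
      (T : {x : TabOf Λ lam // x ∈ pJp P (eZero P lam)}),
      f0 S T = fb (eqv T) (eqvI S) := by
    intro S T
    have h0 := hf0 ⟨tc.1, (hIiff tc.1).mpr tc.2⟩ T S ⟨tc.1, Or.inr tc.2⟩
    have h1 : BA.barphi lam tc (eqv T) * BA.barphi lam (eqvI S) tc
        - f0 S T • BA.barphi lam tc tc ∈ BA.BarVee lam := by
      have e1 : BA.barphi lam tc (eqv T) * BA.barphi lam (eqvI S) tc
          - f0 S T • BA.barphi lam tc tc
          = BA.proj ((⟨SA.bas ⟨lam, tc.1.1, (eqv T).1.1, (tc.1.2, (eqv T).1.2)⟩,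
                memSp tc (eqv T)⟩ : ↥Sp)
              * (⟨SA.bas ⟨lam, (eqvI S).1.1, tc.1.1, ((eqvI S).1.2, tc.1.2)⟩,
                memSp (eqvI S) tc⟩ : ↥Sp)
              - f0 S T • (⟨SA.bas ⟨lam, tc.1.1, tc.1.1, (tc.1.2, tc.1.2)⟩,
                memSp tc tc⟩ : ↥Sp)) := by
        rw [map_sub BA.proj, map_mul BA.proj, map_smul BA.proj, projSp tc (eqv T),
          projSp (eqvI S) tc, projSp tc tc]
      rw [e1]
      apply proj_mem_BarVee SA P Sp hSp BA lam
      have hval : (((⟨SA.bas ⟨lam, tc.1.1, (eqv T).1.1, (tc.1.2, (eqv T).1.2)⟩,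
              memSp tc (eqv T)⟩ : ↥Sp)
            * (⟨SA.bas ⟨lam, (eqvI S).1.1, tc.1.1, ((eqvI S).1.2, tc.1.2)⟩,
              memSp (eqvI S) tc⟩ : ↥Sp)
            - f0 S T • (⟨SA.bas ⟨lam, tc.1.1, tc.1.1, (tc.1.2, tc.1.2)⟩,
              memSp tc tc⟩ : ↥Sp) : ↥Sp) : SA.carrier)
          = SA.bas ⟨lam, tc.1.1, (eqv T).1.1, (tc.1.2, (eqv T).1.2)⟩
              * SA.bas ⟨lam, (eqvI S).1.1, tc.1.1, ((eqvI S).1.2, tc.1.2)⟩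
            - f0 S T • SA.bas ⟨lam, tc.1.1, tc.1.1, (tc.1.2, tc.1.2)⟩ := by
        simp only [MulMemClass.coe_mul, AddSubgroupClass.coe_sub, SetLike.val_smul]
      rw [hval]
      exact h0
    have hb := hfb (eqv T) (eqvI S)
    have h3 := Submodule.sub_mem _ h1 hb
    have h4 : (BA.barphi lam tc (eqv T) * BA.barphi lam (eqvI S) tc
          - f0 S T • BA.barphi lam tc tc)
        - (BA.barphi lam tc (eqv T) * BA.barphi lam (eqvI S) tc
          - fb (eqv T) (eqvI S) • BA.barphi lam tc tc)
        = (fb (eqv T) (eqvI S) - f0 S T) • BA.barphi lam tc tc := by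
      rw [sub_sub_sub_cancel_left, ← sub_smul]
    rw [h4] at h3
    have h5 := barVee_smul_coeff_zero BA lam tc tc _ h3
    exact (sub_eq_zero.mp h5).symm
  -- repr compatibility
  have hrepr : ∀ (x : Z0.M) (T : {x : TabOf Λ lam // x ∈ pJp P (eZero P lam)}),
      Zb.bas.repr (E x) (eqv T) = Z0.bas.repr x T := by
    intro x T
    have hmaps : (Finsupp.lapply (eqv T) : (PTab P lam →₀ R) →ₗ[R] R).comp
          ((Zb.bas.repr : Zb.M →ₗ[R] (PTab P lam →₀ R)).comp E.toLinearMap)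
        = (Finsupp.lapply T : (_ →₀ R) →ₗ[R] R).comp
          (Z0.bas.repr : Z0.M →ₗ[R] (_ →₀ R)) := by
      apply Module.Basis.ext Z0.bas
      intro i
      simp only [LinearMap.comp_apply, LinearEquiv.coe_coe, Finsupp.lapply_apply,
        Module.Basis.repr_self, hEdef, Module.Basis.equiv_apply]
      rw [Finsupp.single_apply, Finsupp.single_apply]
      simp [Equiv.apply_eq_iff_eq]
    exact LinearMap.congr_fun hmaps x
  -- identification of the radicals
  have memIff : ∀ x : Z0.M, x ∈ N0 ↔ E x ∈ Nb := by
    intro x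
    rw [hN0 x, hNb (E x)]
    constructor
    · intro h t
      have ht := h (eqvI.symm t)
      rw [← Equiv.sum_comp eqv (fun s => Zb.bas.repr (E x) s * fb s t)]
      calc (∑ T, Zb.bas.repr (E x) (eqv T) * fb (eqv T) t)
          = ∑ T, Z0.bas.repr x T * f0 (eqvI.symm t) T := by
            refine Finset.sum_congr rfl fun T _ => ?_
            rw [hrepr, key2 (eqvI.symm t) T, Equiv.apply_symm_apply]
        _ = 0 := ht
    · intro h S
      have ht := h (eqvI S)
      rw [← Equiv.sum_comp eqv (fun s => Zb.bas.repr (E x) s * fb s (eqvI S))] at ht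
      calc (∑ T, Z0.bas.repr x T * f0 S T)
          = ∑ T, Zb.bas.repr (E x) (eqv T) * fb (eqv T) (eqvI S) := by
            refine Finset.sum_congr rfl fun T _ => ?_
            rw [hrepr, key2 S T]
        _ = 0 := ht
  -- construction of the induced equivalence on the quotients
  have wd : ∀ x y : Z0.M,
      (Submodule.Quotient.mk x : Z0.M ⧸ N0) = Submodule.Quotient.mk y →
      (Submodule.Quotient.mk (E x) : Zb.M ⧸ Nb) = Submodule.Quotient.mk (E y) := by
    intro x y hxy
    rw [Submodule.Quotient.eq] at hxy ⊢
    rw [← map_sub]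
    exact (memIff _).mp hxy
  have wd' : ∀ x y : Zb.M,
      (Submodule.Quotient.mk x : Zb.M ⧸ Nb) = Submodule.Quotient.mk y →
      (Submodule.Quotient.mk (E.symm x) : Z0.M ⧸ N0)
        = Submodule.Quotient.mk (E.symm y) := by
    intro x y hxy
    rw [Submodule.Quotient.eq] at hxy ⊢
    rw [← map_sub]
    apply (memIff _).mpr
    rwa [LinearEquiv.apply_symm_apply]
  refine ⟨{ toFun := fun y => Quotient.liftOn' y
              (fun x => Submodule.Quotient.mk (E x))
              (fun x y h => wd x y (Quotient.sound' h)),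
            invFun := fun y => Quotient.liftOn' y
              (fun x => Submodule.Quotient.mk (E.symm x))
              (fun x y h => wd' x y (Quotient.sound' h)),
            map_add' := fun y z => Quotient.inductionOn₂' y z (fun x₁ x₂ => by
              show (Submodule.Quotient.mk (E (x₁ + x₂)) : Zb.M ⧸ Nb)
                = Submodule.Quotient.mk (E x₁ + E x₂)
              rw [map_add]),
            map_smul' := fun r y => Quotient.inductionOn' y (fun x => by
              show (Submodule.Quotient.mk (E (r • x)) : Zb.M ⧸ Nb)
                = Submodule.Quotient.mk (r • E x)
              rw [map_smul]),
            left_inv := fun y => Quotient.inductionOn' y (fun x => by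
              show (Submodule.Quotient.mk (E.symm (E x)) : Z0.M ⧸ N0)
                = Submodule.Quotient.mk x
              rw [LinearEquiv.symm_apply_apply]),
            right_inv := fun y => Quotient.inductionOn' y (fun x => by
              show (Submodule.Quotient.mk (E (E.symm x)) : Zb.M ⧸ Nb)
                = Submodule.Quotient.mk x
              rw [LinearEquiv.apply_symm_apply]) },
    fun x => rfl, ?_⟩
  intro a y
  refine Quotient.inductionOn' y (fun x => ?_)
  show (Submodule.Quotient.mk (E (op a • x)) : Zb.M ⧸ Nb)
    = op (BA.proj a) • Submodule.Quotient.mk (E x)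
  rw [equivariance, Submodule.Quotient.mk_smul]
end
end

section
/- Let λ ∈ Λ^+ with (λ,1) ∈ Σ^p. (i) The map φ_T^{(λ,0)} ↦ φ_T^{(λ,1)} for T ∈ T_0^p(λ) is an injective homomorphism Z_p^{(λ,0)} → Z_p^{(λ,1)} of right S^p-modules. (ii) The map φ_T^{(λ,1)} ↦ φ_T for T ∈ T_0(λ) is an isomorphism Z_p^{(λ,1)} ≅ W^λ of right S^p-modules, where the Weyl module W^λ of S(Λ) is regarded as an S^p-module by restriction. -/
/-!
Common framework for the formalization of results of Shoji–Wada,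
"Cyclotomic q-Schur algebras associated to the Ariki-Koike algebra".
-/

open scoped BigOperators TensorProduct
open MulOpposite

noncomputable section

/-! ### Auxiliary lemmas for Statement 6 -/

private theorem sw_repr_eq_of_mem_span {R ι M : Type} [CommRing R]
    [AddCommGroup M] [Module R M]
    (b : Module.Basis ι R M) {K : Set ι} {x y : M}
    (h : x - y ∈ Submodule.span R (⇑b '' K)) {i : ι} (hi : i ∉ K) :
    b.repr x i = b.repr y i := by
  have hs := (Module.Basis.mem_span_image b).1 h
  have h0 : b.repr (x - y) i = 0 := by
    by_contra hne
    exact hi (hs (Finsupp.mem_support_iff.2 hne))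
  rw [map_sub, Finsupp.sub_apply, sub_eq_zero] at h0
  exact h0

private theorem sw_repr_sum_eq {R ι κ M : Type} [CommRing R] [Fintype κ]
    [AddCommGroup M] [Module R M]
    (b : Module.Basis ι R M) (f : κ → ι) (hf : Function.Injective f) (c : κ → R) (k : κ) :
    b.repr (∑ j, c j • b (f j)) (f k) = c k := by
  classical
  rw [map_sum, Finsupp.finset_sum_apply, Finset.sum_eq_single k]
  · simp [Module.Basis.repr_self, Finsupp.single_apply]
  · intro j _ hjk
    simp [Module.Basis.repr_self, Finsupp.single_apply, hf.ne hjk]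
  · simp

private theorem sw_repr_sum_zero {R ι κ M : Type} [CommRing R] [Fintype κ]
    [AddCommGroup M] [Module R M]
    (b : Module.Basis ι R M) (f : κ → ι) (c : κ → R) (i : ι) (hi : ∀ j, f j ≠ i) :
    b.repr (∑ j, c j • b (f j)) i = 0 := by
  classical
  rw [map_sum, Finsupp.finset_sum_apply]
  refine Finset.sum_eq_zero fun j _ => ?_
  simp [Module.Basis.repr_self, Finsupp.single_apply, hi j]

private theorem sw_idx_inj {n r : ℕ} {m : Fin r → ℕ} {Λ : Finset (MultiComp n r m)}
    (lam : LamP Λ) (S : TabOf Λ lam) :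
    Function.Injective (fun T : TabOf Λ lam =>
      (⟨lam, S.1, T.1, (S.2, T.2)⟩ : DJMIndex Λ)) := by
  rintro ⟨nu, t⟩ ⟨nu', t'⟩ h
  simp only [Sigma.mk.inj_iff, heq_eq_eq, true_and] at h
  obtain ⟨hnu, ht⟩ := h
  subst hnu
  simp only [heq_eq_eq, Prod.mk.injEq, true_and] at ht
  subst ht
  rfl

/-! ## Statement 6 (Shoji–Wada, Lemma 3.5)

For `λ ∈ Λ⁺` with `(λ,1) ∈ Σ^p`: (i) `φ_T^{(λ,0)} ↦ φ_T^{(λ,1)}` is an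
injective homomorphism `Z_p^{(λ,0)} → Z_p^{(λ,1)}` of right `S^p`-modules;
(ii) `φ_T^{(λ,1)} ↦ φ_T` is an isomorphism `Z_p^{(λ,1)} ≅ W^λ` of right
`S^p`-modules, `W^λ` being the Weyl module of `S(Λ)` restricted to `S^p`. -/

set_option maxHeartbeats 2000000 in
theorem Zp0_into_Zp1_iso_Weyl
    {R : Type} [CommRing R] [IsDomain R] {n r g : ℕ} {m : Fin r → ℕ}
    (hn : 0 < n) (hr : 0 < r) (hm : ∀ k, 0 < m k)
    {Λ : Finset (MultiComp n r m)} (hΛ : Saturated Λ)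
    (SA : SchurAlgebra R Λ) (P : BlockCtx r g)
    (Sp : Subalgebra R SA.carrier)
    (hSp : (Sp : Set SA.carrier) =
      (Submodule.span R (SA.ZpSet P) : Submodule R SA.carrier))
    (lam : LamP Λ)
    -- `(λ,1) ∈ Σ^p`
    (h1 : ∃ mu : LamS Λ, vecLT (P.aP mu.1) (P.aP lam.1) ∧
      Nonempty (SSTab lam.1 mu.1))
    -- the standard modules `Z_p^{(λ,0)}` and `Z_p^{(λ,1)}` of `S^p`
    (Z0 : BasedRightModule R ↥Sp {x : TabOf Λ lam // x ∈ pJp P (eZero P lam)})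
    (hZ0 : SA.IsZpModule P Sp (eZero P lam) Z0)
    (Z1 : BasedRightModule R ↥Sp
      {x : TabOf Λ lam // x ∈ pJp P (⟨(lam, true), fun _ => h1⟩ : SigmaPIdx Λ P)})
    (hZ1 : SA.IsZpModule P Sp (⟨(lam, true), fun _ => h1⟩ : SigmaPIdx Λ P) Z1)
    -- the Weyl module `W^λ` of `S(Λ)`
    (W : BasedRightModule R SA.carrier (TabOf Λ lam))
    (hW : SA.IsWeylModule lam W) :
    -- (i)
    (∃ F : Z0.M →ₗ[R] Z1.M, Function.Injective F ∧
      (∀ T : {x : TabOf Λ lam // x ∈ pJp P (eZero P lam)},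
        F (Z0.bas T) = Z1.bas ⟨T.1, Or.inl rfl⟩) ∧
      ∀ (a : ↥Sp) (x : Z0.M),
        F (MulOpposite.op a • x) = MulOpposite.op a • F x) ∧
    -- (ii)
    (∃ G : Z1.M ≃ₗ[R] W.M,
      (∀ T : {x : TabOf Λ lam //
          x ∈ pJp P (⟨(lam, true), fun _ => h1⟩ : SigmaPIdx Λ P)},
        G (Z1.bas T) = W.bas T.1) ∧
      ∀ (a : ↥Sp) (x : Z1.M),
        G (MulOpposite.op a • x) = MulOpposite.op (a : SA.carrier) • G x) := by
  classical
  have h1' := h1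
  obtain ⟨mu0, hvec0, ⟨s0⟩⟩ := h1'
  set e1 : SigmaPIdx Λ P := ⟨(lam, true), fun _ => h1⟩ with he1def
  set e0 : SigmaPIdx Λ P := eZero P lam with he0def
  set idx : TabOf Λ lam → TabOf Λ lam → DJMIndex Λ :=
    fun S T => ⟨lam, S.1, T.1, (S.2, T.2)⟩ with hidxdef
  have idx_inj : ∀ S : TabOf Λ lam, Function.Injective (idx S) :=
    fun S => sw_idx_inj lam S
  set K1 : Set (DJMIndex Λ) := {i | MultiComp.SDominates i.1.1 lam.1} with hK1def
  set K0 : Set (DJMIndex Λ) :=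
    {i | MultiComp.SDominates i.1.1 lam.1 ∨ P.aP i.2.1.1 ≠ P.aP lam.1} with hK0def
  -- the Dipper–James–Mathas ideal is spanned by basis elements of dominating shape
  have hSVee : ∀ K : Set (DJMIndex Λ), K1 ⊆ K →
      SA.SVee lam ≤ Submodule.span R (⇑SA.bas '' K) := by
    intro K hK
    rw [SchurAlgebra.SVee, Submodule.span_le]
    rintro x ⟨lam', mu', nu', S', T', hdom, rfl⟩
    exact Submodule.subset_span ⟨⟨lam', mu', nu', (S', T')⟩, hK hdom, rfl⟩
  have hSp1 : SA.SpVee P e1 ≤ Submodule.span R (⇑SA.bas '' K1) := by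
    rw [SchurAlgebra.SpVee, Submodule.span_le]
    intro x hx
    rw [Set.mem_iUnion] at hx
    obtain ⟨⟨e', he'⟩, hx⟩ := hx
    obtain ⟨S, hS, T, hT, rfl⟩ := hx
    refine Submodule.subset_span ⟨_, ?_, rfl⟩
    rcases he' with hdom | ⟨_, _, hfalse⟩
    · exact hdom
    · exact absurd hfalse (by simp [he1def])
  have hSp0 : SA.SpVee P e0 ≤ Submodule.span R (⇑SA.bas '' K0) := by
    rw [SchurAlgebra.SpVee, Submodule.span_le]
    intro x hx
    rw [Set.mem_iUnion] at hx
    obtain ⟨ep, hx⟩ := hx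
    obtain ⟨S, hS, T, hT, rfl⟩ := hx
    refine Submodule.subset_span ⟨_, ?_, rfl⟩
    rcases ep.2 with hdom | ⟨heq, htrue, _⟩
    · exact Or.inl hdom
    · rcases hS with ⟨_, hlt⟩ | ⟨hf, _⟩
      · refine Or.inr fun hc => ?_
        have hv : ((ep.1.1.1 : LamP Λ) : MultiComp n r m) = lam.1 :=
          congrArg Subtype.val heq
        exact hlt.2 (hc.trans (congrArg P.aP hv).symm)
      · rw [hf] at htrue
        exact absurd htrue (by simp)
  -- the distinguished element of `I^p(λ,1)`
  set S1 : {x : TabOf Λ lam // x ∈ pIp P e1} :=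
    ⟨⟨mu0, s0⟩, Or.inl ⟨rfl, hvec0⟩⟩ with hS1def
  -- Bridge A: the `Z₁`-structure constants agree with those of the Weyl module
  have bridgeA : ∀ (T : {x : TabOf Λ lam // x ∈ pJp P e1}) (a : ↥Sp)
      (T0 : TabOf Λ lam),
      W.bas.repr (MulOpposite.op (a : SA.carrier) • W.bas T.1) T0
        = Z1.bas.repr (MulOpposite.op a • Z1.bas T) ⟨T0, Or.inl rfl⟩ := by
    intro T a T0
    have hz : SA.bas (idx S1.1 T.1) * (a : SA.carrier)
        - (∑ T' : {x : TabOf Λ lam // x ∈ pJp P e1},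
          (Z1.bas.repr (MulOpposite.op a • Z1.bas T)) T' • SA.bas (idx S1.1 T'.1))
        ∈ SA.SpVee P e1 := hZ1 S1 T a
    have hw : SA.bas (idx S1.1 T.1) * (a : SA.carrier)
        - (∑ T' : TabOf Λ lam,
          (W.bas.repr (MulOpposite.op (a : SA.carrier) • W.bas T.1)) T' •
            SA.bas (idx S1.1 T'))
        ∈ SA.SVee lam := hW S1.1 T.1 (a : SA.carrier)
    have hmem : (∑ T' : TabOf Λ lam,
          (W.bas.repr (MulOpposite.op (a : SA.carrier) • W.bas T.1)) T' •
            SA.bas (idx S1.1 T'))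
        - (∑ T' : {x : TabOf Λ lam // x ∈ pJp P e1},
          (Z1.bas.repr (MulOpposite.op a • Z1.bas T)) T' • SA.bas (idx S1.1 T'.1))
        ∈ Submodule.span R (⇑SA.bas '' K1) := by
      have h3 := sub_mem (hSp1 hz) (hSVee K1 subset_rfl hw)
      rw [sub_sub_sub_cancel_left] at h3
      exact h3
    have hnot : idx S1.1 T0 ∉ K1 := fun hc => hc.2 rfl
    have hmid := sw_repr_eq_of_mem_span SA.bas hmem hnot
    have hL := sw_repr_sum_eq SA.bas (idx S1.1) (idx_inj S1.1)
      (fun T' => W.bas.repr (MulOpposite.op (a : SA.carrier) • W.bas T.1) T') T0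
    have hR := sw_repr_sum_eq SA.bas
      (fun U : {x : TabOf Λ lam // x ∈ pJp P e1} => idx S1.1 U.1)
      ((idx_inj S1.1).comp Subtype.val_injective)
      (fun U => Z1.bas.repr (MulOpposite.op a • Z1.bas T) U) ⟨T0, Or.inl rfl⟩
    exact hL.symm.trans (hmid.trans hR)
  -- Bridge B: the `Z₀`-structure constants agree with those of the Weyl module
  have bridgeB : ∀ (T : {x : TabOf Λ lam // x ∈ pJp P e0}) (a : ↥Sp)
      (T0 : TabOf Λ lam),
      W.bas.repr (MulOpposite.op (a : SA.carrier) • W.bas T.1) T0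
        = if h : T0 ∈ pJp P e0
          then Z0.bas.repr (MulOpposite.op a • Z0.bas T) ⟨T0, h⟩ else 0 := by
    intro T a T0
    have hpc : pCond P lam T.1 := by
      rcases T.2 with h | h
      · exact absurd h (by simp [he0def, eZero])
      · exact h
    have hS0mem : T.1 ∈ pIp P e0 := Or.inr ⟨rfl, hpc⟩
    have hz : SA.bas (idx T.1 T.1) * (a : SA.carrier)
        - (∑ T' : {x : TabOf Λ lam // x ∈ pJp P e0},
          (Z0.bas.repr (MulOpposite.op a • Z0.bas T)) T' • SA.bas (idx T.1 T'.1))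
        ∈ SA.SpVee P e0 := by
      convert hZ0 ⟨T.1, hS0mem⟩ T a using 4
      · rfl
      · rfl
      · rfl
      · rename_i h; cases h; rfl
    have hw : SA.bas (idx T.1 T.1) * (a : SA.carrier)
        - (∑ T' : TabOf Λ lam,
          (W.bas.repr (MulOpposite.op (a : SA.carrier) • W.bas T.1)) T' •
            SA.bas (idx T.1 T'))
        ∈ SA.SVee lam := hW T.1 T.1 (a : SA.carrier)
    have hmem : (∑ T' : TabOf Λ lam,
          (W.bas.repr (MulOpposite.op (a : SA.carrier) • W.bas T.1)) T' •
            SA.bas (idx T.1 T'))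
        - (∑ T' : {x : TabOf Λ lam // x ∈ pJp P e0},
          (Z0.bas.repr (MulOpposite.op a • Z0.bas T)) T' • SA.bas (idx T.1 T'.1))
        ∈ Submodule.span R (⇑SA.bas '' K0) := by
      have h3 := sub_mem (hSp0 hz) (hSVee K0 (fun i hi => Or.inl hi) hw)
      rw [sub_sub_sub_cancel_left] at h3
      exact h3
    have hnot : idx T.1 T0 ∉ K0 := by
      rintro (hc | hc)
      · exact hc.2 rfl
      · exact hc hpc
    have hmid := sw_repr_eq_of_mem_span SA.bas hmem hnot
    have hL := sw_repr_sum_eq SA.bas (idx T.1) (idx_inj T.1)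
      (fun T' => W.bas.repr (MulOpposite.op (a : SA.carrier) • W.bas T.1) T') T0
    by_cases h0 : T0 ∈ pJp P e0
    · rw [dif_pos h0]
      have hR := sw_repr_sum_eq SA.bas
        (fun U : {x : TabOf Λ lam // x ∈ pJp P e0} => idx T.1 U.1)
        ((idx_inj T.1).comp Subtype.val_injective)
        (fun U => Z0.bas.repr (MulOpposite.op a • Z0.bas T) U) ⟨T0, h0⟩
      exact hL.symm.trans (hmid.trans hR)
    · rw [dif_neg h0]
      have hR := sw_repr_sum_zero SA.bas
        (fun U : {x : TabOf Λ lam // x ∈ pJp P e0} => idx T.1 U.1)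
        (fun U => Z0.bas.repr (MulOpposite.op a • Z0.bas T) U) (idx T.1 T0)
        (fun U hc => h0 ((idx_inj T.1 hc) ▸ U.2))
      exact hL.symm.trans (hmid.trans hR)
  -- scalar commutation instances
  haveI : SMulCommClass R (↥Sp)ᵐᵒᵖ Z0.M := IsScalarTower.to_smulCommClass
  haveI : SMulCommClass R (↥Sp)ᵐᵒᵖ Z1.M := IsScalarTower.to_smulCommClass
  haveI : SMulCommClass R SA.carrierᵐᵒᵖ W.M := IsScalarTower.to_smulCommClass
  haveI : SMulCommClass (↥Sp)ᵐᵒᵖ R Z0.M := SMulCommClass.symm _ _ _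
  haveI : SMulCommClass (↥Sp)ᵐᵒᵖ R Z1.M := SMulCommClass.symm _ _ _
  haveI : SMulCommClass SA.carrierᵐᵒᵖ R W.M := SMulCommClass.symm _ _ _
  -- the isomorphism `G`
  set eqv : {x : TabOf Λ lam // x ∈ pJp P e1} ≃ TabOf Λ lam :=
    ⟨Subtype.val, fun x => ⟨x, Or.inl rfl⟩, fun x => Subtype.ext rfl, fun _ => rfl⟩
    with heqvdef
  set G : Z1.M ≃ₗ[R] W.M := Z1.bas.equiv W.bas eqv with hGdef
  have hGbas : ∀ T : {x : TabOf Λ lam // x ∈ pJp P e1},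
      G (Z1.bas T) = W.bas T.1 := fun T => Module.Basis.equiv_apply Z1.bas T W.bas eqv
  have hGb : ∀ x : Z1.M, G x = ∑ U : {x : TabOf Λ lam // x ∈ pJp P e1},
      (Z1.bas.repr x) U • W.bas U.1 := by
    intro x
    conv_lhs => rw [← Module.Basis.sum_repr Z1.bas x]
    rw [map_sum]
    refine Finset.sum_congr (by convert rfl) fun U _ => ?_
    rw [map_smul, hGbas U]
  have key1 : ∀ (a : ↥Sp) (T : {x : TabOf Λ lam // x ∈ pJp P e1}),
      G (MulOpposite.op a • Z1.bas T)
        = MulOpposite.op (a : SA.carrier) • W.bas T.1 := by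
    intro a T
    refine W.bas.repr.injective (Finsupp.ext fun T0 => ?_)
    rw [hGb]
    have hL := sw_repr_sum_eq W.bas
      (fun U : {x : TabOf Λ lam // x ∈ pJp P e1} => U.1)
      Subtype.val_injective
      (fun U => Z1.bas.repr (MulOpposite.op a • Z1.bas T) U) ⟨T0, Or.inl rfl⟩
    exact hL.trans (bridgeA T a T0).symm
  have hGsmul : ∀ (a : ↥Sp) (x : Z1.M),
      G (MulOpposite.op a • x) = MulOpposite.op (a : SA.carrier) • G x := by
    intro a x
    have h := Z1.bas.ext
      (f₁ := G.toLinearMap ∘ₗ DistribMulAction.toLinearMap R Z1.M (MulOpposite.op a))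
      (f₂ := DistribMulAction.toLinearMap R W.M
        (MulOpposite.op (a : SA.carrier)) ∘ₗ G.toLinearMap)
      (fun T => by
        simp only [LinearMap.comp_apply, LinearEquiv.coe_coe,
          DistribSMul.toLinearMap_apply]
        rw [hGbas T]
        exact key1 a T)
    exact congrFun (congrArg DFunLike.coe h) x
  -- the injection `F`
  set F' : Z0.M →ₗ[R] W.M := Z0.bas.constr R (fun T => W.bas T.1) with hF'def
  have hF'bas : ∀ T : {x : TabOf Λ lam // x ∈ pJp P e0},
      F' (Z0.bas T) = W.bas T.1 := fun T =>
    Module.Basis.constr_basis Z0.bas R (fun T => W.bas T.1) T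
  have hF'b : ∀ x : Z0.M, F' x = ∑ U : {x : TabOf Λ lam // x ∈ pJp P e0},
      (Z0.bas.repr x) U • W.bas U.1 := by
    intro x
    conv_lhs => rw [← Module.Basis.sum_repr Z0.bas x]
    rw [map_sum]
    refine Finset.sum_congr rfl fun U _ => ?_
    rw [map_smul, hF'bas U]
  have key0 : ∀ (a : ↥Sp) (T : {x : TabOf Λ lam // x ∈ pJp P e0}),
      F' (MulOpposite.op a • Z0.bas T)
        = MulOpposite.op (a : SA.carrier) • W.bas T.1 := by
    intro a T
    refine W.bas.repr.injective (Finsupp.ext fun T0 => ?_)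
    rw [hF'b]
    rw [bridgeB T a T0]
    by_cases h0 : T0 ∈ pJp P e0
    · rw [dif_pos h0]
      exact sw_repr_sum_eq W.bas
        (fun U : {x : TabOf Λ lam // x ∈ pJp P e0} => U.1)
        Subtype.val_injective
        (fun U => Z0.bas.repr (MulOpposite.op a • Z0.bas T) U) ⟨T0, h0⟩
    · rw [dif_neg h0]
      exact sw_repr_sum_zero W.bas
        (fun U : {x : TabOf Λ lam // x ∈ pJp P e0} => U.1)
        (fun U => Z0.bas.repr (MulOpposite.op a • Z0.bas T) U) T0
        (fun U hc => h0 (hc ▸ U.2))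
  have hF'sm : ∀ (a : ↥Sp) (x : Z0.M),
      F' (MulOpposite.op a • x)
        = MulOpposite.op (a : SA.carrier) • F' x := by
    intro a x
    have h := Z0.bas.ext
      (f₁ := F' ∘ₗ DistribMulAction.toLinearMap R Z0.M (MulOpposite.op a))
      (f₂ := DistribMulAction.toLinearMap R W.M
        (MulOpposite.op (a : SA.carrier)) ∘ₗ F')
      (fun T => by
        simp only [LinearMap.comp_apply, DistribSMul.toLinearMap_apply]
        rw [hF'bas T]
        exact key0 a T)
    exact congrFun (congrArg DFunLike.coe h) x
  have hF'inj : Function.Injective F' := by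
    set F'' : W.M →ₗ[R] Z0.M := W.bas.constr R
      (fun x => if h : x ∈ pJp P e0 then Z0.bas ⟨x, h⟩ else 0) with hF''def
    have hleft : ∀ y : Z0.M, F'' (F' y) = y := by
      intro y
      have h := Z0.bas.ext (f₁ := F'' ∘ₗ F') (f₂ := LinearMap.id)
        (fun T => by
          simp only [LinearMap.comp_apply, LinearMap.id_apply]
          rw [hF'bas T, hF''def, Module.Basis.constr_basis, dif_pos T.2])
      exact congrFun (congrArg DFunLike.coe h) y
    exact Function.LeftInverse.injective hleft
  refine ⟨⟨G.symm.toLinearMap ∘ₗ F', ?_, ?_, ?_⟩, G, hGbas, hGsmul⟩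
  · intro x y hxy
    exact hF'inj (G.symm.injective hxy)
  · intro T
    have h := hGbas ⟨T.1, Or.inl rfl⟩
    have : G.symm (W.bas T.1) = Z1.bas ⟨T.1, Or.inl rfl⟩ :=
      G.symm_apply_eq.mpr h.symm
    simpa only [LinearMap.comp_apply, LinearEquiv.coe_coe, hF'bas T] using this
  · intro a x
    apply G.injective
    calc G ((G.symm.toLinearMap ∘ₗ F') (MulOpposite.op a • x))
        = F' (MulOpposite.op a • x) := G.apply_symm_apply _
      _ = MulOpposite.op (a : SA.carrier) • F' x := hF'sm a x
      _ = MulOpposite.op (a : SA.carrier) •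
          G ((G.symm.toLinearMap ∘ₗ F') x) := by
          simp only [LinearMap.comp_apply, LinearEquiv.coe_coe,
            LinearEquiv.apply_symm_apply]
      _ = G (MulOpposite.op a • (G.symm.toLinearMap ∘ₗ F') x) :=
          (hGsmul a _).symm
end
end
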